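/- arXiv:2304.00360 — 4 statements merged into one kernel-verified Lean document; each statement's English description precedes it below -/
import Mathlib

section
/- The series ∑_{k=0}^∞ (1/16)^k · binom(2k,k)^2 · H_k/(2k−1)^2 equals (12 − 16 ln 2)/π. -/
open Real

noncomputable def H (m : ℕ) : ℝ := ∑ i ∈ Finset.range m, (1 : ℝ) / (i + 1)

noncomputable def O (m : ℕ) : ℝ := ∑ i ∈ Finset.range m, (1 : ℝ) / (2 * i + 1)

open MeasureTheory intervalIntegral

namespace Stmt10

noncomputable def c (k : ℕ) : ℝ := Nat.centralBinom k / 4 ^ k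

lemma c_zero : c 0 = 1 := by simp [c, Nat.centralBinom]

lemma c_pos (k : ℕ) : 0 < c k := by
  have h : (0:ℝ) < Nat.centralBinom k := by exact_mod_cast Nat.centralBinom_pos k
  have h4 : (0:ℝ) < 4 ^ k := by positivity
  exact div_pos h h4

lemma c_succ (k : ℕ) : c (k + 1) = c k * ((2 * k + 1) / (2 * k + 2)) := by
  have h := Nat.succ_mul_centralBinom_succ k
  have h' : ((k:ℝ) + 1) * Nat.centralBinom (k + 1) = 2 * (2 * k + 1) * Nat.centralBinom k := by
    exact_mod_cast congrArg (Nat.cast : ℕ → ℝ) h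
  have hk : ((k:ℝ) + 1) ≠ 0 := by positivity
  have hcb : (Nat.centralBinom (k+1) : ℝ) = 2 * (2 * k + 1) * Nat.centralBinom k / (k + 1) := by
    field_simp
    linarith [h']
  have h4 : (4:ℝ) ^ k ≠ 0 := by positivity
  rw [c, c, hcb, pow_succ]
  field_simp
  ring

lemma c_le_one (k : ℕ) : c k ≤ 1 := by
  induction k with
  | zero => simp [c_zero]
  | succ n ih =>
    rw [c_succ]
    have h1 : (2 * (n:ℝ) + 1) / (2 * n + 2) ≤ 1 := by
      rw [div_le_one (by positivity)]; linarith
    have := (c_pos n).le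
    calc c n * ((2 * (n:ℝ) + 1) / (2 * n + 2)) ≤ 1 * 1 := by
          apply mul_le_mul ih h1 (by positivity) zero_le_one
      _ = 1 := by ring

lemma c_sq_le (k : ℕ) : c k ^ 2 * (2 * k + 1) ≤ 1 := by
  induction k with
  | zero => simp [c_zero]
  | succ n ih =>
    rw [c_succ]
    have hc := c_pos n
    push_cast
    have hc2 : ((2:ℝ) * n + 2) ≠ 0 := by positivity
    have e : (c n * ((2 * (n:ℝ) + 1) / (2 * (n:ℝ) + 2))) ^ 2 * (2 * ((n:ℝ)+1) + 1)
        = (c n ^ 2 * (2*(n:ℝ)+1)) * ((2*(n:ℝ)+1)*(2*(n:ℝ)+3)/(2*(n:ℝ)+2)^2) := by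
      field_simp
      ring
    have hfrac : (2*(n:ℝ)+1)*(2*(n:ℝ)+3)/(2*(n:ℝ)+2)^2 ≤ 1 := by
      rw [div_le_one (by positivity)]
      nlinarith [sq_nonneg ((n:ℝ)+1)]
    have hbase : (0:ℝ) ≤ c n ^ 2 * (2*(n:ℝ)+1) := by positivity
    calc (c n * ((2 * (n:ℝ) + 1) / (2 * (n:ℝ) + 2))) ^ 2 * (2 * ((n:ℝ)+1) + 1)
        = (c n ^ 2 * (2*(n:ℝ)+1)) * ((2*(n:ℝ)+1)*(2*(n:ℝ)+3)/(2*(n:ℝ)+2)^2) := e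
      _ ≤ (c n ^ 2 * (2*(n:ℝ)+1)) * 1 := by
          apply mul_le_mul_of_nonneg_left hfrac hbase
      _ = c n ^ 2 * (2*(n:ℝ)+1) := by ring
      _ ≤ 1 := ih

noncomputable def aa (k : ℕ) : ℝ := c k / (2 * k - 1)

lemma aa_succ (k : ℕ) : aa (k + 1) = c k - c (k + 1) := by
  have h : (2 * ((k:ℝ) + 1) - 1) = 2 * k + 1 := by ring
  rw [aa, c_succ]
  push_cast
  rw [h]
  have : (2 * (k:ℝ) + 1) ≠ 0 := by positivity
  field_simp
  ring

lemma aa_succ_nonneg (k : ℕ) : 0 ≤ aa (k + 1) := by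
  rw [aa]
  have : (0:ℝ) < 2 * ((k:ℕ):ℝ) + 1 := by positivity
  push_cast
  apply div_nonneg (c_pos _).le
  linarith

lemma aa_succ_le_one (k : ℕ) : aa (k + 1) ≤ 1 := by
  rw [aa_succ]
  have := c_pos (k+1)
  have := c_le_one k
  linarith





lemma wallis (k : ℕ) : ∫ x in (0:ℝ)..(π/2), cos x ^ (2 * k) = π / 2 * c k := by
  induction k with
  | zero => simp [c_zero]
  | succ n ih =>
    have h := integral_cos_pow (a := (0:ℝ)) (b := π/2) (n := 2*n)
    have h2 : 2 * (n + 1) = 2 * n + 2 := by ring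
    rw [h2, h, ih, cos_pi_div_two, sin_zero, c_succ]
    simp [zero_pow]
    push_cast
    ring

lemma sincos (k : ℕ) : ∫ x in (0:ℝ)..(π/2), sin x ^ 2 * cos x ^ (2 * k)
    = π / 2 * (c k - c (k + 1)) := by
  have hpt : ∀ x : ℝ, sin x ^ 2 * cos x ^ (2*k) = cos x ^ (2*k) - cos x ^ (2*(k+1)) := by
    intro x
    have h2 : 2*(k+1) = 2*k + 2 := by ring
    have hs : sin x ^ 2 = 1 - cos x ^ 2 := by nlinarith [sin_sq_add_cos_sq x]
    rw [h2, pow_add, hs]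
    ring
  rw [intervalIntegral.integral_congr (fun x _ => hpt x)]
  rw [intervalIntegral.integral_sub (f := fun x => cos x ^ (2*k)) (g := fun x => cos x ^ (2*(k+1))) ((continuous_cos.pow _).intervalIntegrable _ _)
    ((continuous_cos.pow _).intervalIntegrable _ _), wallis, wallis]
  ring

lemma H_eq_integral (m : ℕ) : H m = ∫ t in (0:ℝ)..1, (∑ i ∈ Finset.range m, t ^ i) := by
  rw [intervalIntegral.integral_finset_sum]
  · rw [H]
    congr 1
    ext i
    rw [integral_pow]
    simp
  · intro i _
    exact (continuous_pow i).intervalIntegrable _ _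

lemma H_nonneg (m : ℕ) : 0 ≤ H m := by
  apply Finset.sum_nonneg
  intro i _
  positivity

lemma H_le (m : ℕ) : H m ≤ m := by
  calc H m ≤ ∑ i ∈ Finset.range m, (1:ℝ) := by
        apply Finset.sum_le_sum
        intro i _
        rw [div_le_one (by positivity)]
        simp
    _ = m := by simp


lemma ftcA {b : ℝ} (hb0 : 0 < b) (hb1 : b < 1) :
    ∫ θ in (0:ℝ)..(π/2), sin θ ^ 2 / (1 - (1 - b^2) * cos θ ^ 2) = π / (2*(1+b)) := by
  set Φ : ℝ → ℝ := fun θ =>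
    (θ - b*(θ + arctan ((1-b)*sin θ*cos θ/(b*cos θ^2 + sin θ^2))))/(1-b^2) with hΦ
  have hb2 : 0 < 1 - b^2 := by nlinarith
  have hden : ∀ θ : ℝ, 0 < b*cos θ^2 + sin θ^2 := by
    intro θ
    nlinarith [sin_sq_add_cos_sq θ, cos_sq_le_one θ, sq_nonneg (cos θ)]
  have hden2 : ∀ θ : ℝ, 0 < 1 - (1-b^2) * cos θ^2 := by
    intro θ
    nlinarith [cos_sq_le_one θ, sq_nonneg (cos θ)]
  have hderiv : ∀ θ : ℝ, HasDerivAt Φ (sin θ ^ 2 / (1 - (1 - b^2) * cos θ ^ 2)) θ := by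
    intro θ
    have hnum : HasDerivAt (fun x => (1-b)*sin x*cos x)
        ((1-b)*cos θ*cos θ + (1-b)*sin θ*(-sin θ)) θ := by
      exact (((hasDerivAt_sin θ).const_mul (1-b)).mul (hasDerivAt_cos θ))
    have hd : HasDerivAt (fun x => b*cos x^2 + sin x^2)
        (b*(2*cos θ^1*(-sin θ)) + 2*sin θ^1*cos θ) θ := by
      have h1 := ((hasDerivAt_cos θ).pow 2).const_mul b
      have h2 := (hasDerivAt_sin θ).pow 2
      exact (h1.add h2).congr_deriv (by norm_num)
    have hR : HasDerivAt (fun x => (1-b)*sin x*cos x/(b*cos x^2 + sin x^2))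
        ((((1-b)*cos θ*cos θ + (1-b)*sin θ*(-sin θ)) * (b*cos θ^2 + sin θ^2)
          - (1-b)*sin θ*cos θ * (b*(2*cos θ^1*(-sin θ)) + 2*sin θ^1*cos θ))
          / (b*cos θ^2 + sin θ^2)^2) θ := hnum.div hd (ne_of_gt (hden θ))
    have harc := (Real.hasDerivAt_arctan ((1-b)*sin θ*cos θ/(b*cos θ^2 + sin θ^2))).comp θ hR
    have hfull := (((hasDerivAt_id θ).sub
      (((hasDerivAt_id θ).add harc).const_mul b)).div_const (1-b^2))
    refine HasDerivAt.congr_deriv hfull (Eq.symm ?_)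
    set S := sin θ
    set C := cos θ
    have e0 : S^2 = 1 - C^2 := by
      have := sin_sq_add_cos_sq θ
      nlinarith
    have hdenSC : 0 < b*C^2 + S^2 := hden θ
    have hden2SC : 0 < 1 - (1-b^2) * C^2 := hden2 θ
    have hq : (0:ℝ) < 1 + ((1-b)*S*C/(b*C^2 + S^2))^2 := by positivity
    field_simp
    ring_nf
    simp only [show S^10 = (1-C^2)^5 by rw [show (10:ℕ) = 2*5 from rfl, pow_mul, e0],
      show S^9 = S*(1-C^2)^4 by rw [show (9:ℕ) = 2*4+1 from rfl, pow_succ, pow_mul, e0]; ring,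
      show S^8 = (1-C^2)^4 by rw [show (8:ℕ) = 2*4 from rfl, pow_mul, e0],
      show S^7 = S*(1-C^2)^3 by rw [show (7:ℕ) = 2*3+1 from rfl, pow_succ, pow_mul, e0]; ring,
      show S^6 = (1-C^2)^3 by rw [show (6:ℕ) = 2*3 from rfl, pow_mul, e0],
      show S^5 = S*(1-C^2)^2 by rw [show (5:ℕ) = 2*2+1 from rfl, pow_succ, pow_mul, e0]; ring,
      show S^4 = (1-C^2)^2 by rw [show (4:ℕ) = 2*2 from rfl, pow_mul, e0],
      show S^3 = S*(1-C^2) by rw [show (3:ℕ) = 2+1 from rfl, pow_succ, e0]; ring,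
      e0]
    ring
  have hcont : Continuous fun θ : ℝ => sin θ ^ 2 / (1 - (1 - b^2) * cos θ ^ 2) := by
    apply Continuous.div (by fun_prop) (by fun_prop)
    intro θ
    exact (hden2 θ).ne'
  rw [integral_eq_sub_of_hasDerivAt (fun x _ => hderiv x) (hcont.intervalIntegrable _ _)]
  have h1 : Φ (π/2) = π / (2*(1+b)) := by
    rw [hΦ]
    simp only [sin_pi_div_two, cos_pi_div_two]
    norm_num
    rw [div_eq_div_iff (by nlinarith) (by nlinarith)]
    ring
  have h0 : Φ 0 = 0 := by
    rw [hΦ]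
    simp
  rw [h1, h0, sub_zero]




lemma sincos' (k : ℕ) : ∫ x in (0:ℝ)..(π/2), sin x ^ 2 * cos x ^ (2 * k)
    = π / 2 * aa (k+1) := by rw [sincos, aa_succ]

lemma pi_div_two_pos' : (0:ℝ) < π / 2 := by positivity

lemma hasSum_A {y : ℝ} (h0 : 0 ≤ y) (h1 : y < 1) :
    HasSum (fun k : ℕ => aa (k+1) * y^(k+1)) (1 - Real.sqrt (1-y)) := by
  rcases eq_or_lt_of_le h0 with h|hy0
  · simp only [← h, ne_eq]
    have : (fun k : ℕ => aa (k+1) * (0:ℝ)^(k+1)) = fun _ => 0 := by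
      funext k; simp
    rw [this]
    norm_num
  · set b := Real.sqrt (1-y) with hbdef
    have hb0 : 0 < b := Real.sqrt_pos.mpr (by linarith)
    have hb1 : b < 1 := by
      have h := Real.sqrt_lt_sqrt (by linarith : (0:ℝ) ≤ 1 - y) (by linarith : 1 - y < 1)
      rwa [Real.sqrt_one] at h
    have hb2 : b^2 = 1 - y := Real.sq_sqrt (by linarith)
    have hyb : y = 1 - b^2 := by rw [hb2]; ring
    set F : ℕ → ℝ → ℝ := fun k θ => sin θ^2 * cos θ^(2*k) * y^(k+1) with hF
    have hFnn : ∀ k θ, 0 ≤ F k θ := by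
      intro k θ
      refine mul_nonneg (mul_nonneg (sq_nonneg _) ?_) (pow_nonneg h0 _)
      rw [pow_mul]
      positivity
    have hFint : ∀ k, IntegrableOn (F k) (Set.Ioc 0 (π/2)) volume := by
      intro k
      exact (((continuous_sin.pow 2).mul (continuous_cos.pow (2*k))).mul
        continuous_const).integrableOn_Ioc
    have hFval : ∀ k, ∫ θ in Set.Ioc (0:ℝ) (π/2), F k θ = (π/2) * (aa (k+1) * y^(k+1)) := by
      intro k
      rw [← intervalIntegral.integral_of_le pi_div_two_pos'.le]
      rw [hF]
      simp only
      rw [intervalIntegral.integral_mul_const, sincos']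
      ring
    have hsummable : Summable (fun k => (π/2) * (aa (k+1) * y^(k+1))) := by
      apply Summable.of_nonneg_of_le
      · intro k
        have h1 := aa_succ_nonneg k
        have h2 : (0:ℝ) ≤ y ^ (k+1) := pow_nonneg h0 _
        have := pi_div_two_pos'
        nlinarith [mul_nonneg h1 h2]
      · intro k
        show (π/2) * (aa (k+1) * y^(k+1)) ≤ (π/2) * y^(k+1)
        have hyk : (0:ℝ) ≤ y ^ (k+1) := pow_nonneg h0 _
        have h2 : aa (k+1) * y^(k+1) ≤ 1 * y^(k+1) :=
          mul_le_mul_of_nonneg_right (aa_succ_le_one k) hyk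
        nlinarith [pi_div_two_pos']
      · apply Summable.mul_left
        have : Summable (fun k : ℕ => y ^ k) := summable_geometric_of_lt_one h0 h1
        exact (summable_nat_add_iff 1).mpr this
    have key := MeasureTheory.hasSum_integral_of_summable_integral_norm
      (μ := volume.restrict (Set.Ioc 0 (π/2))) (F := F) hFint ?_
    swap
    · apply Summable.congr hsummable
      intro k
      rw [← hFval k]
      apply setIntegral_congr_fun measurableSet_Ioc
      intro θ _
      exact (Real.norm_of_nonneg (hFnn k θ)).symm
    -- evaluate the integral of the tsum
    have hpt : ∀ θ ∈ Set.Ioc (0:ℝ) (π/2),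
        ∑' k, F k θ = y * (sin θ^2 / (1 - y * cos θ^2)) := by
      intro θ hθ
      have hr0 : 0 ≤ y * cos θ^2 := mul_nonneg h0 (sq_nonneg _)
      have hr1 : y * cos θ^2 < 1 := by nlinarith [cos_sq_le_one θ, sq_nonneg (cos θ)]
      have hgeo := (hasSum_geometric_of_lt_one hr0 hr1).mul_left (sin θ^2 * y)
      have : (fun k : ℕ => sin θ^2 * y * (y * cos θ^2)^k) = fun k => F k θ := by
        funext k
        rw [hF]
        simp only [mul_pow, pow_succ]
        ring
      rw [this] at hgeo
      rw [hgeo.tsum_eq, inv_eq_one_div]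
      ring
    have hIeq : ∫ θ in Set.Ioc (0:ℝ) (π/2), (∑' k, F k θ)
        = y * (π / (2*(1+b))) := by
      rw [setIntegral_congr_fun measurableSet_Ioc hpt]
      rw [← intervalIntegral.integral_of_le pi_div_two_pos'.le]
      rw [intervalIntegral.integral_const_mul]
      rw [hyb, ftcA hb0 hb1]
    rw [hIeq] at key
    have hval : y * (π / (2*(1+b))) = (π/2) * (1 - b) := by
      rw [hyb]
      have : (1:ℝ) + b ≠ 0 := by nlinarith
      field_simp
      ring
    rw [hval] at key
    have hvals : ∀ k, ∫ θ in Set.Ioc (0:ℝ) (π/2), F k θ = (π/2) * (aa (k+1) * y^(k+1)) := hFval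
    have key2 : HasSum (fun k => (π/2) * (aa (k+1) * y^(k+1))) ((π/2) * (1-b)) := by
      apply HasSum.congr_fun key
      intro k
      rw [hvals k]
    have := key2.mul_left (2/π)
    have hpi : (2/π) * ((π/2) * (1-b)) = 1 - b := by
      field_simp
    rw [hpi] at this
    apply HasSum.congr_fun this
    intro k
    field_simp




lemma ftcB {y : ℝ} (h0 : 0 < y) (h1 : y < 1) :
    ∫ t in (0:ℝ)..1, y / (Real.sqrt (1 - t*y) + Real.sqrt (1-y))
      = 2 - 2*Real.sqrt (1-y) + 2*Real.sqrt (1-y) *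
          Real.log (2*Real.sqrt (1-y)/(1+Real.sqrt (1-y))) := by
  set s := Real.sqrt (1-y) with hs
  have hs0 : 0 < s := Real.sqrt_pos.mpr (by linarith)
  have hs2 : s^2 = 1 - y := Real.sq_sqrt (by linarith)
  set G : ℝ → ℝ := fun t => -2*Real.sqrt (1-t*y) + 2*s*Real.log (Real.sqrt (1-t*y) + s)
    with hG
  have hderiv : ∀ t ∈ Set.uIcc (0:ℝ) 1,
      HasDerivAt G (y / (Real.sqrt (1 - t*y) + s)) t := by
    intro t ht
    rw [Set.uIcc_of_le (by norm_num : (0:ℝ) ≤ 1)] at ht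
    have htt : 1 - t*y > 0 := by
      have := ht.1; have := ht.2
      nlinarith
    set v := Real.sqrt (1 - t*y) with hv
    have hv0 : 0 < v := Real.sqrt_pos.mpr htt
    have hv2 : v^2 = 1 - t*y := Real.sq_sqrt htt.le
    have hin : HasDerivAt (fun t : ℝ => 1 - t*y) (-y) t := by
      simpa using ((hasDerivAt_id t).mul_const y).const_sub 1
    have hsq : HasDerivAt (fun t : ℝ => Real.sqrt (1 - t*y)) (1/(2*v) * (-y)) t := by
      exact (Real.hasDerivAt_sqrt htt.ne').comp t hin
    have hlog : HasDerivAt (fun t : ℝ => Real.log (Real.sqrt (1 - t*y) + s))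
        ((v + s)⁻¹ * (1/(2*v) * (-y))) t := by
      have hvs : v + s ≠ 0 := by positivity
      exact (Real.hasDerivAt_log hvs).comp t (hsq.add_const s)
    have hfull := ((hsq.const_mul (-2)).add (hlog.const_mul (2*s)))
    refine HasDerivAt.congr_deriv hfull (Eq.symm ?_)
    have hvs : v + s ≠ 0 := by positivity
    field_simp
    ring
  have hcont : Continuous fun t : ℝ => y / (Real.sqrt (1 - t*y) + s) := by
    apply Continuous.div continuous_const
    · fun_prop
    · intro t
      have : 0 ≤ Real.sqrt (1 - t*y) := Real.sqrt_nonneg _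
      positivity
  rw [integral_eq_sub_of_hasDerivAt hderiv (hcont.intervalIntegrable _ _)]
  have e1 : (1:ℝ) - 1*y = 1 - y := by ring
  have e0 : (1:ℝ) - 0*y = 1 := by ring
  rw [hG]
  simp only [e1, e0, Real.sqrt_one, ← hs]
  have hlog2 : Real.log (2*s/(1+s)) = Real.log (s + s) - Real.log (1 + s) := by
    rw [Real.log_div (by positivity) (by positivity)]
    ring_nf
  rw [hlog2]
  ring

lemma hasSum_alpha {y : ℝ} (h0 : 0 < y) (h1 : y < 1) :
    HasSum (fun k : ℕ => aa (k+1) * H (k+1) * y^(k+1))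
      (2 - 2*Real.sqrt (1-y) + 2*Real.sqrt (1-y) *
        Real.log (2*Real.sqrt (1-y)/(1+Real.sqrt (1-y)))) := by
  set s := Real.sqrt (1-y) with hs
  set F : ℕ → ℝ → ℝ := fun k t => aa (k+1) * y^(k+1) * (∑ i ∈ Finset.range (k+1), t^i)
    with hF
  have hFnn : ∀ k, ∀ t ∈ Set.Ioo (0:ℝ) 1, 0 ≤ F k t := by
    intro k t ht
    apply mul_nonneg (mul_nonneg (aa_succ_nonneg k) (pow_nonneg h0.le _))
    apply Finset.sum_nonneg
    intro i _
    exact pow_nonneg ht.1.le _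
  have hFint : ∀ k, IntegrableOn (F k) (Set.Ioo 0 1) volume := by
    intro k
    exact ((by fun_prop : Continuous (F k)).integrableOn_Icc).mono_set
      Set.Ioo_subset_Icc_self
  have hFval : ∀ k, ∫ t in Set.Ioo (0:ℝ) 1, F k t = aa (k+1) * H (k+1) * y^(k+1) := by
    intro k
    rw [← MeasureTheory.integral_Ioc_eq_integral_Ioo,
      ← intervalIntegral.integral_of_le (by norm_num : (0:ℝ) ≤ 1)]
    rw [hF]
    simp only
    rw [intervalIntegral.integral_const_mul, ← H_eq_integral]
    ring
  have hsummable : Summable (fun k => aa (k+1) * H (k+1) * y^(k+1)) := by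
    apply Summable.of_nonneg_of_le
    · intro k
      exact mul_nonneg (mul_nonneg (aa_succ_nonneg k) (H_nonneg _)) (pow_nonneg h0.le _)
    · intro k
      show aa (k+1) * H (k+1) * y^(k+1) ≤ (k+1 : ℝ) * y^(k+1)
      have h2 : (0:ℝ) ≤ y ^ (k+1) := pow_nonneg h0.le _
      have h3 : aa (k+1) * H (k+1) ≤ 1 * (k+1:ℝ) := by
        apply mul_le_mul (aa_succ_le_one k) ?_ (H_nonneg _)
          (by linarith [aa_succ_nonneg k, aa_succ_le_one k])
        have := H_le (k+1)
        push_cast at this ⊢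
        linarith
      nlinarith
    · have hbase : Summable (fun n : ℕ => (n:ℝ) * y^n) := by
        have := summable_pow_mul_geometric_of_norm_lt_one 1 (r := y)
          (by rw [Real.norm_eq_abs, abs_of_nonneg h0.le]; exact h1)
        simpa using this
      have := (summable_nat_add_iff 1).mpr hbase
      apply Summable.congr this
      intro k
      push_cast
      ring
  have key := MeasureTheory.hasSum_integral_of_summable_integral_norm
      (μ := volume.restrict (Set.Ioo 0 1)) (F := F) hFint ?_
  swap
  · apply Summable.congr hsummable
    intro k
    rw [← hFval k]
    apply setIntegral_congr_fun measurableSet_Ioo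
    intro t ht
    exact (Real.norm_of_nonneg (hFnn k t ht)).symm
  have hpt : ∀ t ∈ Set.Ioo (0:ℝ) 1,
      ∑' k, F k t = y / (Real.sqrt (1 - t*y) + s) := by
    intro t ht
    have hty0 : 0 ≤ t*y := by nlinarith [ht.1]
    have hty1 : t*y < 1 := by nlinarith [ht.1, ht.2]
    have hA := hasSum_A h0.le h1
    have hAt := hasSum_A hty0 hty1
    have hsub := (hA.sub hAt).mul_left (1/(1-t))
    have ht1 : (1:ℝ) - t ≠ 0 := by nlinarith [ht.2]
    have heq : (fun k : ℕ => (1/(1-t)) * (aa (k+1) * y^(k+1) - aa (k+1) * (t*y)^(k+1)))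
        = fun k => F k t := by
      funext k
      rw [hF]
      simp only
      rw [geom_sum_eq (by intro hteq; exact ht1 (by rw [hteq]; ring))]
      rw [mul_pow]
      have ht2 : t - 1 ≠ 0 := by intro hh; apply ht1; linarith [sub_eq_zero.mp hh]
      field_simp
      ring
    rw [heq] at hsub
    rw [hsub.tsum_eq]
    -- now show (1/(1-t)) * ((1 - s) - (1 - √(1-t*y))) = y/(√(1-t*y)+s)
    have hv2 : Real.sqrt (1-t*y)^2 = 1 - t*y := Real.sq_sqrt (by linarith)
    have hs2 : s^2 = 1 - y := Real.sq_sqrt (by linarith)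
    have hv0 : 0 < Real.sqrt (1-t*y) := Real.sqrt_pos.mpr (by nlinarith)
    have hs0 : 0 < s := Real.sqrt_pos.mpr (by linarith)
    have hvs : Real.sqrt (1-t*y) + s ≠ 0 := by positivity
    field_simp
    nlinarith [hv2, hs2]
  have hIeq : ∫ t in Set.Ioo (0:ℝ) 1, (∑' k, F k t)
      = 2 - 2*s + 2*s*Real.log (2*s/(1+s)) := by
    rw [setIntegral_congr_fun measurableSet_Ioo hpt,
      ← MeasureTheory.integral_Ioc_eq_integral_Ioo,
      ← intervalIntegral.integral_of_le (by norm_num : (0:ℝ) ≤ 1)]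
    exact ftcB h0 h1
  rw [hIeq] at key
  apply HasSum.congr_fun key
  intro k
  rw [hFval k]


noncomputable def f (θ : ℝ) : ℝ :=
  sin θ^2/cos θ^2 * (2 - 2*sin θ + 2*sin θ*Real.log (2*sin θ/(1+sin θ)))

noncomputable def Φ (θ : ℝ) : ℝ :=
  (-2)*cos θ + (-4)*(cos θ/(1+sin θ)) + 2*((cos θ + 1/cos θ)*Real.log (2/(1+sin θ)))
    + 2*(((1-cos θ)^2/cos θ)*Real.log (sin θ)) + 4*Real.log (1+cos θ)

lemma phi_deriv {x : ℝ} (hx : x ∈ Set.Ioo 0 (π/2)) : HasDerivAt Φ (f x) x := by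
  have hs : 0 < sin x := sin_pos_of_pos_of_lt_pi hx.1 (by linarith [hx.2, pi_pos])
  have hc : 0 < cos x := cos_pos_of_mem_Ioo ⟨by linarith [hx.1, pi_pos], hx.2⟩
  have h1s : (0:ℝ) < 1 + sin x := by linarith
  have h1c : (0:ℝ) < 1 + cos x := by linarith
  have h1 : HasDerivAt (fun θ : ℝ => (-2)*cos θ) ((-2)*(-sin x)) x :=
    (hasDerivAt_cos x).const_mul (-2)
  have h2 : HasDerivAt (fun θ : ℝ => (-4)*(cos θ/(1+sin θ)))
      ((-4)*((-sin x*(1+sin x) - cos x*cos x)/(1+sin x)^2)) x := by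
    exact ((hasDerivAt_cos x).div ((hasDerivAt_sin x).const_add 1) h1s.ne').const_mul (-4)
  have hu : HasDerivAt (fun θ : ℝ => cos θ + 1/cos θ)
      (-sin x + (0*cos x - 1*(-sin x))/(cos x)^2) x := by
    exact (hasDerivAt_cos x).add (((hasDerivAt_const x 1)).div (hasDerivAt_cos x) hc.ne')
  have hw : HasDerivAt (fun θ : ℝ => 2/(1+sin θ))
      ((0*(1+sin x) - 2*cos x)/(1+sin x)^2) x :=
    ((hasDerivAt_const x 2)).div ((hasDerivAt_sin x).const_add 1) h1s.ne'
  have hwpos : 0 < 2/(1+sin x) := by positivity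
  have hv : HasDerivAt (fun θ : ℝ => Real.log (2/(1+sin θ)))
      ((2/(1+sin x))⁻¹ * ((0*(1+sin x) - 2*cos x)/(1+sin x)^2)) x :=
    by have := (Real.hasDerivAt_log hwpos.ne').comp x hw; exact this
  have h3 : HasDerivAt (fun θ : ℝ => 2*((cos θ + 1/cos θ)*Real.log (2/(1+sin θ))))
      (2*((-sin x + (0*cos x - 1*(-sin x))/(cos x)^2)*Real.log (2/(1+sin x))
        + (cos x + 1/cos x)*((2/(1+sin x))⁻¹ * ((0*(1+sin x) - 2*cos x)/(1+sin x)^2)))) x :=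
    (hu.mul hv).const_mul 2
  have hu2 : HasDerivAt (fun θ : ℝ => (1-cos θ)^2/cos θ)
      (((2:ℕ)*(1-cos x)^(2-1)* - -sin x*cos x - (1-cos x)^2*(-sin x))/(cos x)^2) x := by
    exact (((hasDerivAt_cos x).const_sub 1).pow 2).div (hasDerivAt_cos x) hc.ne'
  have hv2 : HasDerivAt (fun θ : ℝ => Real.log (sin θ)) ((sin x)⁻¹ * cos x) x :=
    (Real.hasDerivAt_log hs.ne').comp x (hasDerivAt_sin x)
  have h4 : HasDerivAt (fun θ : ℝ => 2*(((1-cos θ)^2/cos θ)*Real.log (sin θ)))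
      (2*(((((2:ℕ)*(1-cos x)^(2-1)* - -sin x*cos x - (1-cos x)^2*(-sin x))/(cos x)^2))*Real.log (sin x)
        + ((1-cos x)^2/cos x)*((sin x)⁻¹ * cos x))) x :=
    (hu2.mul hv2).const_mul 2
  have h5 : HasDerivAt (fun θ : ℝ => 4*Real.log (1+cos θ))
      (4*((1+cos x)⁻¹ * (-sin x))) x := by
    exact ((Real.hasDerivAt_log h1c.ne').comp x ((hasDerivAt_cos x).const_add 1)).const_mul 4
  have hfull := (((h1.add h2).add h3).add h4).add h5
  refine HasDerivAt.congr_deriv hfull (Eq.symm ?_)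
  rw [f]
  rw [Real.log_div (by positivity) h1s.ne', Real.log_mul two_ne_zero hs.ne',
    Real.log_div two_ne_zero h1s.ne']
  set S := sin x
  set C := cos x
  have e0 : S^2 = 1 - C^2 := by nlinarith [sin_sq_add_cos_sq x]
  field_simp
  ring_nf
  simp only [show S^10 = (1-C^2)^5 by rw [show (10:ℕ) = 2*5 from rfl, pow_mul, e0],
    show S^9 = S*(1-C^2)^4 by rw [show (9:ℕ) = 2*4+1 from rfl, pow_succ, pow_mul, e0]; ring,
    show S^8 = (1-C^2)^4 by rw [show (8:ℕ) = 2*4 from rfl, pow_mul, e0],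
    show S^7 = S*(1-C^2)^3 by rw [show (7:ℕ) = 2*3+1 from rfl, pow_succ, pow_mul, e0]; ring,
    show S^6 = (1-C^2)^3 by rw [show (6:ℕ) = 2*3 from rfl, pow_mul, e0],
    show S^5 = S*(1-C^2)^2 by rw [show (5:ℕ) = 2*2+1 from rfl, pow_succ, pow_mul, e0]; ring,
    show S^4 = (1-C^2)^2 by rw [show (4:ℕ) = 2*2 from rfl, pow_mul, e0],
    show S^3 = S*(1-C^2) by rw [show (3:ℕ) = 2+1 from rfl, pow_succ, e0]; ring,
    e0]
  ring







noncomputable def P1 (θ : ℝ) : ℝ := 2*((cos θ + 1/cos θ)*Real.log (2/(1+sin θ)))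
noncomputable def P2 (θ : ℝ) : ℝ := 2*(((1-cos θ)^2/cos θ)*Real.log (sin θ))

lemma basic_facts {θ : ℝ} (hθ : θ ∈ Set.Icc 0 (π/2)) :
    0 ≤ sin θ ∧ sin θ ≤ 1 ∧ 0 ≤ cos θ ∧ cos θ ≤ 1 ∧ cos θ^2 = (1 - sin θ)*(1 + sin θ) := by
  have h1 : 0 ≤ sin θ := sin_nonneg_of_nonneg_of_le_pi hθ.1 (by linarith [hθ.2, pi_pos])
  have h3 : 0 ≤ cos θ := cos_nonneg_of_mem_Icc ⟨by linarith [hθ.1, pi_pos], hθ.2⟩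
  exact ⟨h1, sin_le_one θ, h3, cos_le_one θ, by nlinarith [sin_sq_add_cos_sq θ]⟩

lemma P1_bounds {θ : ℝ} (hθ : θ ∈ Set.Icc 0 (π/2)) :
    0 ≤ P1 θ ∧ P1 θ ≤ 2*(cos θ^3 + cos θ) := by
  obtain ⟨hs0, hs1, hc0, hc1, hid⟩ := basic_facts hθ
  rcases eq_or_lt_of_le hc0 with hc|hc
  · rw [P1, ← hc]
    norm_num
  · have h1s : (0:ℝ) < 1 + sin θ := by linarith
    have harg : (1:ℝ) ≤ 2/(1+sin θ) := by rw [le_div_iff₀ h1s]; linarith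
    have hL0 : 0 ≤ Real.log (2/(1+sin θ)) := Real.log_nonneg harg
    have hL1 : Real.log (2/(1+sin θ)) ≤ cos θ^2 := by
      have := Real.log_le_sub_one_of_pos (by positivity : (0:ℝ) < 2/(1+sin θ))
      have h2 : 2/(1+sin θ) - 1 = (1-sin θ)/(1+sin θ) := by field_simp; ring
      have h3 : (1-sin θ)/(1+sin θ) ≤ 1 - sin θ := by
        rw [div_le_iff₀ h1s]; nlinarith
      nlinarith
    have hcpos : 0 < cos θ + 1/cos θ := by positivity
    constructor
    · rw [P1]; positivity
    · rw [P1]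
      have key : (cos θ + 1/cos θ)*Real.log (2/(1+sin θ)) ≤ (cos θ + 1/cos θ)*cos θ^2 :=
        mul_le_mul_of_nonneg_left hL1 hcpos.le
      have e : (cos θ + 1/cos θ)*cos θ^2 = cos θ^3 + cos θ := by
        field_simp
      nlinarith

lemma P2_nonpos {θ : ℝ} (hθ : θ ∈ Set.Icc 0 (π/2)) : P2 θ ≤ 0 := by
  obtain ⟨hs0, hs1, hc0, hc1, hid⟩ := basic_facts hθ
  rw [P2]
  have hL : Real.log (sin θ) ≤ 0 := Real.log_nonpos hs0 hs1
  have hco : 0 ≤ (1-cos θ)^2/cos θ := by positivity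
  nlinarith [mul_nonneg hco (neg_nonneg.mpr hL)]

lemma neg_log_sin_le {θ : ℝ} (hs : 0 < sin θ) : -Real.log (sin θ) ≤ (1 - sin θ)/sin θ := by
  have := Real.log_le_sub_one_of_pos (show (0:ℝ) < (sin θ)⁻¹ by positivity)
  rw [Real.log_inv] at this
  have h2 : (sin θ)⁻¹ - 1 = (1 - sin θ)/sin θ := by field_simp
  linarith

lemma P2_core {θ : ℝ} (hθ : θ ∈ Set.Icc 0 (π/2)) {B : ℝ}
    (hB : ((1-cos θ)^2/cos θ) * ((1 - sin θ)/sin θ) ≤ B) (hs : 0 < sin θ) (hc : 0 < cos θ) :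
    -(2*B) ≤ P2 θ := by
  obtain ⟨hs0, hs1, hc0, hc1, hid⟩ := basic_facts hθ
  have hlog := neg_log_sin_le hs
  have hco : 0 ≤ (1-cos θ)^2/cos θ := by positivity
  have h1 : -(((1-cos θ)^2/cos θ) * ((1 - sin θ)/sin θ)) ≤
      ((1-cos θ)^2/cos θ) * Real.log (sin θ) := by
    have := mul_le_mul_of_nonneg_left hlog hco
    nlinarith
  rw [P2]
  nlinarith

lemma P2_lb1 {θ : ℝ} (hθ : θ ∈ Set.Icc 0 (π/2)) : -(2*(cos θ/sin θ)) ≤ P2 θ := by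
  obtain ⟨hs0, hs1, hc0, hc1, hid⟩ := basic_facts hθ
  rcases eq_or_lt_of_le hs0 with hs|hs
  · have hcos : cos θ = 1 := by nlinarith
    rw [P2, ← hs, hcos]
    norm_num
  rcases eq_or_lt_of_le hc0 with hc|hc
  · rw [P2, ← hc]
    norm_num
  apply P2_core hθ ?_ hs hc
  have h1 : 1 - sin θ ≤ cos θ^2 := by nlinarith
  have h2 : (1-cos θ)^2 ≤ 1 := by nlinarith
  rw [div_mul_div_comm, div_le_div_iff₀ (by positivity) (by positivity)]
  have e1 : 0 ≤ (1-cos θ)^2 := sq_nonneg _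
  nlinarith [mul_le_mul h2 h1 (by linarith) (by norm_num : (0:ℝ) ≤ 1)]

lemma P2_lb0 {θ : ℝ} (hθ : θ ∈ Set.Icc 0 (π/2)) : -(2*(sin θ^3/cos θ)) ≤ P2 θ := by
  obtain ⟨hs0, hs1, hc0, hc1, hid⟩ := basic_facts hθ
  rcases eq_or_lt_of_le hs0 with hs|hs
  · have hcos : cos θ = 1 := by nlinarith
    rw [P2, ← hs, hcos]
    norm_num
  rcases eq_or_lt_of_le hc0 with hc|hc
  · rw [P2, ← hc]
    norm_num
  apply P2_core hθ ?_ hs hc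
  have h1c : 1 - cos θ ≤ sin θ^2 := by nlinarith
  have h2 : (1-cos θ)^2 ≤ sin θ^4 := by nlinarith
  rw [div_mul_div_comm, div_le_div_iff₀ (by positivity) (by positivity)]
  have h3 : (1-cos θ)^2 * (1 - sin θ) ≤ sin θ^4 * 1 :=
    mul_le_mul h2 (by linarith) (by linarith) (by positivity)
  nlinarith [mul_pos hc hs, pow_pos hs 4]

lemma phi_cont : ContinuousOn Φ (Set.Icc 0 (π/2)) := by
  have hbase : ContinuousOn (fun θ : ℝ => (-2)*cos θ + (-4)*(cos θ/(1+sin θ))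
      + 4*Real.log (1+cos θ)) (Set.Icc 0 (π/2)) := by
    apply ContinuousOn.add
    apply ContinuousOn.add
    · fun_prop
    · apply ContinuousOn.mul continuousOn_const
      apply ContinuousOn.div continuous_cos.continuousOn (by fun_prop)
      intro θ hθ
      have := (basic_facts hθ).1
      intro h; linarith [h]
    · apply ContinuousOn.mul continuousOn_const
      apply ContinuousOn.log (by fun_prop)
      intro θ hθ
      have := (basic_facts hθ).2.2.1
      intro h; linarith [h]
  have hP1 : ContinuousOn P1 (Set.Icc 0 (π/2)) := by
    intro x hx
    by_cases hxe : x = π/2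
    · -- squeeze at π/2
      subst hxe
      have hval : P1 (π/2) = 0 := by
        rw [P1, cos_pi_div_two, sin_pi_div_two]
        norm_num
      rw [ContinuousWithinAt, hval]
      apply squeeze_zero'
      · filter_upwards [eventually_mem_nhdsWithin] with θ hθ
        exact (P1_bounds hθ).1
      · filter_upwards [eventually_mem_nhdsWithin] with θ hθ
        exact (P1_bounds hθ).2
      · have hcont2 : Continuous (fun θ : ℝ => 2*(cos θ^3 + cos θ)) := by fun_prop
        have := (hcont2.tendsto (π/2)).mono_left (nhdsWithin_le_nhds
          (s := Set.Icc 0 (π/2)))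
        simpa [cos_pi_div_two] using this
    · have hxlt : x < π/2 := lt_of_le_of_ne hx.2 hxe
      have hc : 0 < cos x := cos_pos_of_mem_Ioo ⟨by linarith [hx.1, pi_pos], hxlt⟩
      have h1s : (0:ℝ) < 1 + sin x := by
        have := (basic_facts hx).1; linarith
      apply ContinuousAt.continuousWithinAt
      apply ContinuousAt.mul continuousAt_const
      apply ContinuousAt.mul
      · exact (continuous_cos.continuousAt).add
          (continuousAt_const.div continuous_cos.continuousAt hc.ne')
      · apply (Real.continuousAt_log (by positivity)).comp
        exact continuousAt_const.div ((continuous_sin.continuousAt).const_add 1) h1s.ne'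
  have hP2 : ContinuousOn P2 (Set.Icc 0 (π/2)) := by
    intro x hx
    by_cases hxe : x = π/2
    · subst hxe
      have hval : P2 (π/2) = 0 := by
        rw [P2, cos_pi_div_two, sin_pi_div_two]
        norm_num
      rw [ContinuousWithinAt, hval]
      have hg : Filter.Tendsto (fun θ : ℝ => -(2*(cos θ/sin θ))) (nhdsWithin (π/2) (Set.Icc 0 (π/2)))
          (nhds 0) := by
        have hcont2 : ContinuousAt (fun θ : ℝ => -(2*(cos θ/sin θ))) (π/2) := by
          apply ContinuousAt.neg
          apply ContinuousAt.mul continuousAt_const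
          apply ContinuousAt.div continuous_cos.continuousAt continuous_sin.continuousAt
          rw [sin_pi_div_two]; norm_num
        have := hcont2.tendsto.mono_left (nhdsWithin_le_nhds (s := Set.Icc 0 (π/2)))
        simpa [cos_pi_div_two, sin_pi_div_two] using this
      apply tendsto_of_tendsto_of_tendsto_of_le_of_le' hg tendsto_const_nhds
      · filter_upwards [eventually_mem_nhdsWithin] with θ hθ
        exact P2_lb1 hθ
      · filter_upwards [eventually_mem_nhdsWithin] with θ hθ
        exact P2_nonpos hθ
    by_cases hx0 : x = 0
    · subst hx0
      have hval : P2 0 = 0 := by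
        rw [P2, cos_zero, sin_zero]
        norm_num
      rw [ContinuousWithinAt, hval]
      have hg : Filter.Tendsto (fun θ : ℝ => -(2*(sin θ^3/cos θ))) (nhdsWithin 0 (Set.Icc 0 (π/2)))
          (nhds 0) := by
        have hcont2 : ContinuousAt (fun θ : ℝ => -(2*(sin θ^3/cos θ))) 0 := by
          apply ContinuousAt.neg
          apply ContinuousAt.mul continuousAt_const
          apply ContinuousAt.div (continuous_sin.continuousAt.pow 3) continuous_cos.continuousAt
          rw [cos_zero]; norm_num
        have := hcont2.tendsto.mono_left (nhdsWithin_le_nhds (s := Set.Icc 0 (π/2)))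
        simpa [cos_zero, sin_zero] using this
      apply tendsto_of_tendsto_of_tendsto_of_le_of_le' hg tendsto_const_nhds
      · filter_upwards [eventually_mem_nhdsWithin] with θ hθ
        exact P2_lb0 hθ
      · filter_upwards [eventually_mem_nhdsWithin] with θ hθ
        exact P2_nonpos hθ
    · have hxlt : x < π/2 := lt_of_le_of_ne hx.2 hxe
      have hx0' : 0 < x := lt_of_le_of_ne hx.1 (Ne.symm hx0)
      have hc : 0 < cos x := cos_pos_of_mem_Ioo ⟨by linarith [pi_pos], hxlt⟩
      have hs : 0 < sin x := sin_pos_of_pos_of_lt_pi hx0' (by linarith [pi_pos])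
      apply ContinuousAt.continuousWithinAt
      apply ContinuousAt.mul continuousAt_const
      apply ContinuousAt.mul
      · exact ContinuousAt.div (by fun_prop) continuous_cos.continuousAt hc.ne'
      · exact (Real.continuousAt_log hs.ne').comp continuous_sin.continuousAt
  have : Φ = fun θ => ((-2)*cos θ + (-4)*(cos θ/(1+sin θ)) + 4*Real.log (1+cos θ))
      + P1 θ + P2 θ := by
    funext θ
    rw [Φ, P1, P2]
    ring
  rw [this]
  exact (hbase.add hP1).add hP2

lemma f_bound {θ : ℝ} (hθ : θ ∈ Set.Ioc 0 (π/2)) : ‖f θ‖ ≤ 3 := by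
  have hθ' : θ ∈ Set.Icc 0 (π/2) := ⟨hθ.1.le, hθ.2⟩
  obtain ⟨hs0, hs1, hc0, hc1, hid⟩ := basic_facts hθ'
  rcases eq_or_lt_of_le hc0 with hc|hc
  · rw [f, ← hc]
    norm_num
  · have hs : 0 < sin θ := sin_pos_of_pos_of_lt_pi hθ.1 (by linarith [hθ.2, pi_pos])
    have hslt : sin θ < 1 := by nlinarith
    have h1s : (0:ℝ) < 1 + sin θ := by linarith
    have hne : (1:ℝ) - sin θ ≠ 0 := by linarith
    have hX : sin θ^2/cos θ^2 * (2 - 2*sin θ) = 2*sin θ^2/(1+sin θ) := by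
      rw [hid]
      field_simp [hne]
    have hXb : 2*sin θ^2/(1+sin θ) ≤ 2 := by
      rw [div_le_iff₀ h1s]; nlinarith
    have hXb0 : 0 ≤ 2*sin θ^2/(1+sin θ) := by positivity
    have hL : Real.log (2*sin θ/(1+sin θ)) ≤ 0 := by
      apply Real.log_nonpos (by positivity)
      rw [div_le_one h1s]; linarith
    have hLb : -Real.log (2*sin θ/(1+sin θ)) ≤ (1-sin θ)/(2*sin θ) := by
      have := Real.log_le_sub_one_of_pos (show (0:ℝ) < (1+sin θ)/(2*sin θ) by positivity)
      have hinv : Real.log ((1+sin θ)/(2*sin θ)) = -Real.log (2*sin θ/(1+sin θ)) := by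
        rw [← Real.log_inv]
        congr 1
        field_simp
      rw [hinv] at this
      have e2 : (1+sin θ)/(2*sin θ) - 1 = (1-sin θ)/(2*sin θ) := by field_simp; ring
      linarith
    have hY : |sin θ^2/cos θ^2 * (2*sin θ*Real.log (2*sin θ/(1+sin θ)))| ≤ 1 := by
      rw [abs_mul, abs_of_nonneg (by positivity : (0:ℝ) ≤ sin θ^2/cos θ^2)]
      rw [abs_mul, abs_of_nonneg (by positivity : (0:ℝ) ≤ 2*sin θ)]
      rw [abs_of_nonpos hL]
      have step : 2*sin θ * -Real.log (2*sin θ/(1+sin θ)) ≤ 1 - sin θ := by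
        have := mul_le_mul_of_nonneg_left hLb (by positivity : (0:ℝ) ≤ 2*sin θ)
        have e3 : 2*sin θ * ((1-sin θ)/(2*sin θ)) = 1 - sin θ := by field_simp
        linarith [e3 ▸ this]
      have hfrac : sin θ^2/cos θ^2 * (1 - sin θ) = sin θ^2/(1+sin θ) := by
        rw [hid]; field_simp [hne]
      have hfin : sin θ^2/(1+sin θ) ≤ 1 := by
        rw [div_le_one h1s]; nlinarith
      calc sin θ^2/cos θ^2 * (2*sin θ * -Real.log (2*sin θ/(1+sin θ)))
          ≤ sin θ^2/cos θ^2 * (1 - sin θ) := by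
            apply mul_le_mul_of_nonneg_left step (by positivity)
        _ = sin θ^2/(1+sin θ) := hfrac
        _ ≤ 1 := hfin
    rw [f]
    have e4 : sin θ^2/cos θ^2 * (2 - 2*sin θ + 2*sin θ*Real.log (2*sin θ/(1+sin θ)))
        = 2*sin θ^2/(1+sin θ) + sin θ^2/cos θ^2 * (2*sin θ*Real.log (2*sin θ/(1+sin θ))) := by
      rw [← hX]; ring
    rw [e4, Real.norm_eq_abs]
    calc |2*sin θ^2/(1+sin θ) + sin θ^2/cos θ^2 * (2*sin θ*Real.log (2*sin θ/(1+sin θ)))|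
        ≤ |2*sin θ^2/(1+sin θ)| + |sin θ^2/cos θ^2 * (2*sin θ*Real.log (2*sin θ/(1+sin θ)))| :=
          abs_add_le _ _
      _ ≤ 2 + 1 := by
          apply add_le_add ?_ hY
          rw [abs_of_nonneg hXb0]; exact hXb
      _ = 3 := by norm_num

lemma f_measurable : Measurable f := by
  apply Measurable.mul
  · exact (continuous_sin.measurable.pow_const 2).div (continuous_cos.measurable.pow_const 2)
  · apply Measurable.add
    · fun_prop
    · apply Measurable.mul (by fun_prop)
      apply Real.measurable_log.comp
      exact ((continuous_sin.measurable.const_mul 2).div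
        ((continuous_sin.measurable.const_add 1)))
  
lemma f_integrable : IntervalIntegrable f volume 0 (π/2) := by
  rw [intervalIntegrable_iff_integrableOn_Ioc_of_le (by positivity : (0:ℝ) ≤ π/2)]
  apply Integrable.mono' (integrable_const (3:ℝ))
    (f_measurable.aestronglyMeasurable)
  rw [ae_restrict_iff' measurableSet_Ioc]
  filter_upwards with θ hθ
  exact f_bound hθ

lemma ftcC : ∫ θ in (0:ℝ)..(π/2), f θ = 6 - 8*Real.log 2 := by
  rw [integral_eq_sub_of_hasDeriv_right_of_le (by positivity : (0:ℝ) ≤ π/2) phi_cont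
    (fun x hx => (phi_deriv hx).hasDerivWithinAt) f_integrable]
  have h1 : Φ (π/2) = 0 := by
    rw [Φ, cos_pi_div_two, sin_pi_div_two]
    norm_num
  have h0 : Φ 0 = -6 + 8*Real.log 2 := by
    rw [Φ, cos_zero, sin_zero]
    norm_num [Real.log_zero]
    ring
  rw [h1, h0]
  ring





lemma t_eq (k : ℕ) : (1/16 : ℝ)^k * (Nat.centralBinom k : ℝ)^2 * (H k/(2*(k:ℝ)-1)^2)
    = aa k^2 * H k := by
  have hne : (2*(k:ℝ)-1) ≠ 0 := by
    rcases Nat.eq_zero_or_pos k with h|h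
    · subst h; norm_num
    · have : (1:ℝ) ≤ k := by exact_mod_cast h
      intro hh; nlinarith
  have h16 : ((4:ℝ)^k)^2 = 16^k := by
    rw [← pow_mul, mul_comm, pow_mul]
    norm_num
  rw [aa, c]
  have h16' : (16:ℝ)^k ≠ 0 := by positivity
  have h4 : ((4:ℝ)^k) ≠ 0 := by positivity
  rw [div_pow, div_pow, div_pow, one_pow, h16]
  field_simp

lemma summable_tail : Summable (fun k : ℕ => aa (k+1)^2 * H (k+1)) := by
  apply Summable.of_nonneg_of_le
  · intro k
    exact mul_nonneg (sq_nonneg _) (H_nonneg _)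
  · intro k
    show aa (k+1)^2 * H (k+1) ≤ 1/((k:ℝ)+1)^2
    have hc2 : c (k+1)^2 * (2*(k:ℝ)+3) ≤ 1 := by
      have := c_sq_le (k+1)
      push_cast at this
      linarith
    have hH : H (k+1) ≤ (k:ℝ)+1 := by
      have := H_le (k+1)
      push_cast at this
      linarith
    have haa : aa (k+1)^2 = c (k+1)^2 / (2*(k:ℝ)+1)^2 := by
      rw [aa, div_pow]
      congr 2
      push_cast
      ring
    rw [haa]
    rw [div_mul_eq_mul_div, div_le_div_iff₀ (by positivity) (by positivity)]
    have hcnn : 0 ≤ c (k+1)^2 := sq_nonneg _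
    have hHnn : 0 ≤ H (k+1) := H_nonneg _
    -- c² * H * (k+1)² ≤ (2k+1)²  using c² ≤ 1/(2k+3), H ≤ k+1, (k+1)³ ≤ (2k+3)(2k+1)²
    have h1 : c (k+1)^2 * H (k+1) ≤ c (k+1)^2 * ((k:ℝ)+1) :=
      mul_le_mul_of_nonneg_left hH hcnn
    have h2 : c (k+1)^2 * ((k:ℝ)+1) * ((k:ℝ)+1)^2 ≤ (2*(k:ℝ)+1)^2 := by
      nlinarith [sq_nonneg ((k:ℝ)+1), sq_nonneg (2*(k:ℝ)+1), mul_nonneg hcnn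
        (by positivity : (0:ℝ) ≤ ((k:ℝ)+1)^3)]
    calc c (k+1)^2 * H (k+1) * ((k:ℝ)+1)^2
        ≤ c (k+1)^2 * ((k:ℝ)+1) * ((k:ℝ)+1)^2 := by nlinarith [sq_nonneg ((k:ℝ)+1)]
      _ ≤ (2*(k:ℝ)+1)^2 := h2
      _ ≤ 1 * (2*(k:ℝ)+1)^2 := by linarith
  · have hb : Summable (fun n : ℕ => 1/(n:ℝ)^2) := by
      rw [Real.summable_one_div_nat_pow]
      norm_num
    have := (summable_nat_add_iff 1).mpr hb
    apply Summable.congr this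
    intro k
    push_cast
    ring

lemma main_hassum : HasSum (fun k : ℕ => aa (k+1)^2 * H (k+1)) (2/π * (6 - 8*Real.log 2)) := by
  set F : ℕ → ℝ → ℝ := fun k θ => aa (k+1) * H (k+1) * (sin θ^2 * cos θ^(2*k)) with hF
  have hFnn : ∀ k θ, 0 ≤ F k θ := by
    intro k θ
    apply mul_nonneg (mul_nonneg (aa_succ_nonneg k) (H_nonneg _))
    apply mul_nonneg (sq_nonneg _)
    rw [pow_mul]
    positivity
  have hFint : ∀ k, IntegrableOn (F k) (Set.Ioo 0 (π/2)) volume := by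
    intro k
    exact ((by fun_prop : Continuous (F k)).integrableOn_Icc).mono_set
      Set.Ioo_subset_Icc_self
  have hFval : ∀ k, ∫ θ in Set.Ioo (0:ℝ) (π/2), F k θ = (π/2) * (aa (k+1)^2 * H (k+1)) := by
    intro k
    rw [← MeasureTheory.integral_Ioc_eq_integral_Ioo,
      ← intervalIntegral.integral_of_le (by positivity : (0:ℝ) ≤ π/2)]
    rw [hF]
    simp only
    rw [intervalIntegral.integral_const_mul, sincos']
    ring
  have hsummable : Summable (fun k => (π/2) * (aa (k+1)^2 * H (k+1))) :=
    summable_tail.mul_left _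
  have key := MeasureTheory.hasSum_integral_of_summable_integral_norm
      (μ := volume.restrict (Set.Ioo 0 (π/2))) (F := F) hFint ?_
  swap
  · apply Summable.congr hsummable
    intro k
    rw [← hFval k]
    apply setIntegral_congr_fun measurableSet_Ioo
    intro θ _
    exact (Real.norm_of_nonneg (hFnn k θ)).symm
  have hpt : ∀ θ ∈ Set.Ioo (0:ℝ) (π/2), ∑' k, F k θ = f θ := by
    intro θ hθ
    have hs : 0 < sin θ := sin_pos_of_pos_of_lt_pi hθ.1 (by linarith [hθ.2, pi_pos])
    have hc : 0 < cos θ := cos_pos_of_mem_Ioo ⟨by linarith [hθ.1, pi_pos], hθ.2⟩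
    have hy0 : 0 < cos θ^2 := by positivity
    have hy1 : cos θ^2 < 1 := by nlinarith [sin_sq_add_cos_sq θ]
    have hsq : Real.sqrt (1 - cos θ^2) = sin θ := by
      rw [show 1 - cos θ^2 = sin θ^2 by nlinarith [sin_sq_add_cos_sq θ]]
      exact Real.sqrt_sq hs.le
    have halpha := (hasSum_alpha hy0 hy1).mul_left (sin θ^2/cos θ^2)
    rw [hsq] at halpha
    have heq : (fun k : ℕ => (sin θ^2/cos θ^2) * (aa (k+1) * H (k+1) * (cos θ^2)^(k+1)))
        = fun k => F k θ := by
      funext k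
      rw [hF]
      simp only
      rw [pow_succ, pow_mul]
      field_simp
      ring
    rw [heq] at halpha
    rw [halpha.tsum_eq, f]
  have hIeq : ∫ θ in Set.Ioo (0:ℝ) (π/2), (∑' k, F k θ) = 6 - 8*Real.log 2 := by
    rw [setIntegral_congr_fun measurableSet_Ioo hpt,
      ← MeasureTheory.integral_Ioc_eq_integral_Ioo,
      ← intervalIntegral.integral_of_le (by positivity : (0:ℝ) ≤ π/2)]
    exact ftcC
  rw [hIeq] at key
  have key2 : HasSum (fun k => (π/2) * (aa (k+1)^2 * H (k+1))) (6 - 8*Real.log 2) := by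
    apply HasSum.congr_fun key
    intro k
    rw [hFval k]
  have h3 := key2.mul_left (2/π)
  have hpi : π ≠ 0 := pi_ne_zero
  apply HasSum.congr_fun h3
  intro k
  field_simp

end Stmt10

theorem stmt10 :
    ∑' k : ℕ, (1 / 16 : ℝ) ^ k * (Nat.centralBinom k : ℝ) ^ 2 * (H k / (2 * (k : ℝ) - 1) ^ 2)
      = (12 - 16 * Real.log 2) / π := by
  rw [tsum_congr Stmt10.t_eq]
  have hsum0 := Stmt10.main_hassum
  have hsummable : Summable (fun k : ℕ => Stmt10.aa k^2 * H k) :=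
    (summable_nat_add_iff 1).mp hsum0.summable
  rw [Summable.tsum_eq_zero_add hsummable]
  have h0 : Stmt10.aa 0^2 * H 0 = 0 := by simp [H]
  rw [h0, hsum0.tsum_eq, zero_add]
  have hpi : π ≠ 0 := Real.pi_ne_zero
  field_simp
  ring
end

section
/- The series ∑_{n=0}^∞ (1/4)^n · binom(2n,n)/(4n+1) equals Γ(1/4)^2/(4√(2π)), and it equals the integral ∫_0^1 dt/√(1−t^4). -/
open Real MeasureTheory

noncomputable def cbq (n : ℕ) : ℝ := (Nat.centralBinom n : ℝ) / 4 ^ n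

lemma cbq_zero : cbq 0 = 1 := by simp [cbq, Nat.centralBinom]

lemma cbq_pos (n : ℕ) : 0 < cbq n := by
  have h : (0:ℝ) < (Nat.centralBinom n : ℝ) := by exact_mod_cast Nat.centralBinom_pos n
  rw [cbq]
  positivity

lemma cbq_rec (n : ℕ) : (2 * n + 2) * cbq (n + 1) = (2 * n + 1) * cbq n := by
  have h := Nat.succ_mul_centralBinom_succ n
  have h' : ((n + 1 : ℕ) : ℝ) * (Nat.centralBinom (n + 1) : ℝ)
      = 2 * (2 * n + 1) * (Nat.centralBinom n : ℝ) := by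
    exact_mod_cast congrArg (Nat.cast : ℕ → ℝ) h
  push_cast at h'
  have h4 : (4 : ℝ) ^ (n + 1) = 4 * 4 ^ n := by ring
  rw [cbq, cbq, h4]
  field_simp
  nlinarith [h', pow_pos (show (0:ℝ) < 4 by norm_num) n]

lemma cbq_le_one (n : ℕ) : cbq n ≤ 1 := by
  induction n with
  | zero => simp [cbq_zero]
  | succ n ih =>
    have h := cbq_rec n
    have hp := cbq_pos n
    have hp1 := cbq_pos (n + 1)
    nlinarith

lemma cbq_sq (n : ℕ) : (2 * n + 1) * cbq n ^ 2 ≤ 1 := by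
  induction n with
  | zero => simp [cbq_zero]
  | succ n ih =>
    have h := cbq_rec n
    have hp := cbq_pos n
    have hp1 := cbq_pos (n + 1)
    have key : cbq (n + 1) = (2 * n + 1) / (2 * n + 2) * cbq n := by
      field_simp
      nlinarith
    rw [key]
    have h1 : (0:ℝ) ≤ 2 * (n:ℝ) + 1 := by positivity
    push_cast
    have h2 : (0:ℝ) < 2 * (n:ℝ) + 2 := by positivity
    rw [mul_pow, div_pow, mul_comm, mul_assoc, div_mul_eq_mul_div,
      div_le_one (by positivity)]
    nlinarith [sq_nonneg (cbq n), ih]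

lemma summable_aux {q : ℝ} (h0 : 0 ≤ q) (h1 : q < 1) :
    Summable fun n : ℕ => (n : ℝ) * q ^ (n - 1) := by
  rw [← summable_nat_add_iff 1]
  simp only [Nat.add_sub_cancel]
  have h := summable_pow_mul_geometric_of_norm_lt_one (R := ℝ) 1 (r := q)
    (by rwa [Real.norm_eq_abs, abs_of_nonneg h0])
  simp only [pow_one] at h
  apply ((h.add (summable_geometric_of_lt_one h0 h1)).congr)
  intro n
  push_cast
  ring

lemma summable_cbq {x : ℝ} (hx : |x| < 1) : Summable fun n => cbq n * x ^ n := by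
  apply Summable.of_norm
  apply Summable.of_nonneg_of_le (fun n => norm_nonneg _) (fun n => ?_)
    (summable_geometric_of_lt_one (abs_nonneg x) hx)
  rw [norm_mul, norm_pow, Real.norm_eq_abs, Real.norm_eq_abs,
    abs_of_pos (cbq_pos n)]
  calc cbq n * |x| ^ n ≤ 1 * |x| ^ n := by
        exact mul_le_mul_of_nonneg_right (cbq_le_one n) (by positivity)
    _ = |x| ^ n := one_mul _

lemma summable_n_cbq {x : ℝ} (hx : |x| < 1) :
    Summable fun n : ℕ => cbq n * (n * x ^ (n - 1)) := by
  apply Summable.of_norm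
  apply Summable.of_nonneg_of_le (fun n => norm_nonneg _) (fun n => ?_)
    (summable_aux (abs_nonneg x) hx)
  rw [norm_mul, norm_mul, norm_pow, Real.norm_eq_abs, Real.norm_eq_abs, Real.norm_eq_abs,
    abs_of_pos (cbq_pos n), Nat.abs_cast]
  calc cbq n * ((n:ℝ) * |x| ^ (n-1)) ≤ 1 * ((n:ℝ) * |x| ^ (n-1)) :=
        mul_le_mul_of_nonneg_right (cbq_le_one n) (by positivity)
    _ = _ := one_mul _

noncomputable def F (x : ℝ) : ℝ := ∑' n : ℕ, cbq n * x ^ n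

lemma F_hasDerivAt {x : ℝ} (hx : |x| < 1) :
    HasDerivAt F (∑' n : ℕ, cbq n * ((n : ℝ) * x ^ (n - 1))) x := by
  set r : ℝ := (|x| + 1) / 2 with hr
  have hr0 : 0 ≤ r := by positivity
  have hxr : |x| < r := by rw [hr]; linarith
  have hr1 : r < 1 := by rw [hr]; linarith
  have hsum_u : Summable fun n : ℕ => (n : ℝ) * r ^ (n - 1) := summable_aux hr0 hr1
  have key := hasDerivAt_tsum_of_isPreconnected (t := Metric.ball (0:ℝ) r)
    (g := fun n y => cbq n * y ^ n) (g' := fun n y => cbq n * ((n:ℝ) * y ^ (n - 1)))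
    (y₀ := 0) (u := fun n : ℕ => (n : ℝ) * r ^ (n - 1))
    hsum_u Metric.isOpen_ball (convex_ball _ _).isPreconnected
    (fun n y _ => by
      simpa using (HasDerivAt.const_mul (cbq n) (hasDerivAt_pow n y)))
    (fun n y hy => ?_) (by simpa using (lt_of_le_of_lt (abs_nonneg x) hxr))
    (by
      apply Summable.of_norm
      apply Summable.of_nonneg_of_le (fun n => norm_nonneg _) (fun n => ?_)
        (summable_geometric_of_lt_one hr0 hr1)
      simp only [norm_mul, norm_pow, Real.norm_eq_abs]
      cases n with
      | zero => simpa [abs_of_pos (cbq_pos 0)] using cbq_le_one 0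
      | succ n => simp [abs_of_pos (cbq_pos (n+1))]; positivity)
    (by simpa [Real.norm_eq_abs] using hxr)
  · exact key
  · simp only [Metric.mem_ball, dist_zero_right, Real.norm_eq_abs] at hy
    rw [Real.norm_eq_abs, abs_mul, abs_mul, abs_of_pos (cbq_pos n), Nat.abs_cast, abs_pow]
    calc cbq n * ((n:ℝ) * |y| ^ (n-1)) ≤ 1 * ((n:ℝ) * r ^ (n-1)) := by
          apply mul_le_mul (cbq_le_one n) _ (by positivity) zero_le_one
          exact mul_le_mul_of_nonneg_left
            (pow_le_pow_left₀ (abs_nonneg y) hy.le _) (Nat.cast_nonneg n)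
      _ = _ := one_mul _

lemma deriv_identity {x : ℝ} (hx : |x| < 1) :
    (1 - x) * (∑' n : ℕ, cbq n * ((n : ℝ) * x ^ (n - 1))) = F x / 2 := by
  have hD := summable_n_cbq hx
  have hF := summable_cbq hx
  -- D = ∑' n, (n+1) * cbq (n+1) * x ^ n
  have hshift : (∑' n : ℕ, cbq n * ((n : ℝ) * x ^ (n - 1)))
      = ∑' n : ℕ, ((n : ℝ) + 1) * cbq (n + 1) * x ^ n := by
    rw [Summable.tsum_eq_zero_add hD]
    simp only [Nat.cast_zero, zero_mul, mul_zero, zero_add, Nat.add_sub_cancel]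
    congr 1
    funext n
    push_cast
    ring
  -- each term : (n+1) * cbq (n+1) = (n + 1/2) * cbq n
  have hterm : ∀ n : ℕ, ((n : ℝ) + 1) * cbq (n + 1) = ((n : ℝ) + 1 / 2) * cbq n := by
    intro n
    have := cbq_rec n
    linarith
  have e1 : ∀ n : ℕ, x * (cbq n * (n * x ^ (n - 1))) = (n : ℝ) * cbq n * x ^ n := by
    intro n
    cases n with
    | zero => simp
    | succ n =>
      simp only [Nat.add_sub_cancel]
      push_cast
      ring
  have hT : Summable fun n : ℕ => (n : ℝ) * cbq n * x ^ n := (hD.mul_left x).congr e1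
  have hxD : x * (∑' n : ℕ, cbq n * ((n : ℝ) * x ^ (n - 1)))
      = ∑' n : ℕ, (n : ℝ) * cbq n * x ^ n := by
    rw [← tsum_mul_left]
    exact tsum_congr e1
  have hD2 : (∑' n : ℕ, cbq n * ((n : ℝ) * x ^ (n - 1)))
      = ∑' n : ℕ, ((n : ℝ) + 1 / 2) * cbq n * x ^ n := by
    rw [hshift]
    exact tsum_congr fun n => by rw [hterm]
  have hS1 : Summable fun n : ℕ => ((n : ℝ) + 1 / 2) * cbq n * x ^ n := by
    apply (hT.add (hF.mul_left (1 / 2))).congr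
    intro n
    ring
  have : (∑' n : ℕ, cbq n * ((n : ℝ) * x ^ (n - 1)))
      - x * (∑' n : ℕ, cbq n * ((n : ℝ) * x ^ (n - 1)))
      = F x / 2 := by
    rw [hxD, hD2, ← Summable.tsum_sub hS1 hT]
    rw [F, eq_div_iff (two_ne_zero), ← tsum_mul_right]
    exact tsum_congr fun n => by ring
  linarith [this]

lemma G_hasDerivAt {x : ℝ} (hx : |x| < 1) :
    HasDerivAt (fun y => F y ^ 2 * (1 - y)) 0 x := by
  have hF := F_hasDerivAt hx
  set D := ∑' n : ℕ, cbq n * ((n : ℝ) * x ^ (n - 1)) with hD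
  have h1 : HasDerivAt (fun y => F y ^ 2) (2 * F x ^ 1 * D) x := by
    simpa using hF.fun_pow 2
  have h2 : HasDerivAt (fun y : ℝ => 1 - y) (-1) x := by
    simpa using (hasDerivAt_id x).const_sub 1
  have h := h1.fun_mul h2
  refine h.congr_deriv ?_
  have key := deriv_identity hx
  rw [← hD] at key
  linear_combination (2 : ℝ) * F x * key

lemma F_eq {x : ℝ} (hx : x ∈ Set.Ico (0:ℝ) 1) : F x = 1 / Real.sqrt (1 - x) := by
  obtain ⟨hx0, hx1⟩ := hx
  have habs : ∀ y ∈ Set.Icc (0:ℝ) x, |y| < 1 := by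
    intro y hy
    rw [abs_lt]
    constructor <;> [linarith [hy.1]; linarith [hy.2]]
  have hconst := constant_of_has_deriv_right_zero
    (f := fun y => F y ^ 2 * (1 - y)) (a := 0) (b := x)
    (fun y hy => (G_hasDerivAt (habs y hy)).continuousAt.continuousWithinAt)
    (fun y hy => (G_hasDerivAt (habs y ⟨hy.1, hy.2.le.trans (le_refl x)⟩)).hasDerivWithinAt)
    x (Set.right_mem_Icc.2 hx0)
  have hF0 : F 0 = 1 := by
    rw [F, tsum_eq_single 0 (fun n hn => ?_)]
    · simp [cbq_zero]
    · simp [zero_pow hn]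
  simp only [hF0, one_pow, sub_zero, mul_one] at hconst
  -- hconst : F x ^ 2 * (1 - x) = 1
  have hFpos : 1 ≤ F x := by
    have h := Summable.le_tsum (summable_cbq (by rw [abs_of_nonneg hx0]; exact hx1)) 0
      (fun n _ => mul_nonneg (cbq_pos n).le (pow_nonneg hx0 n))
    simpa [cbq_zero, F] using h
  have hs : 0 < Real.sqrt (1 - x) := Real.sqrt_pos.2 (by linarith)
  have ht : F x * Real.sqrt (1 - x) = 1 := by
    have hsq : (F x * Real.sqrt (1 - x)) ^ 2 = 1 := by
      rw [mul_pow, Real.sq_sqrt (by linarith)]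
      exact hconst
    have hnn : 0 ≤ F x * Real.sqrt (1 - x) := by positivity
    rw [← Real.sqrt_sq hnn, hsq, Real.sqrt_one]
  field_simp
  linarith [ht]

lemma F_eq' {x : ℝ} (hx : x ∈ Set.Ico (0:ℝ) 1) :
    ∑' n : ℕ, cbq n * x ^ n = 1 / Real.sqrt (1 - x) := F_eq hx

lemma summable_c : Summable fun n : ℕ => cbq n / (4 * (n : ℝ) + 1) := by
  have hb : Summable fun n : ℕ => ((n : ℝ) + 1) ^ (-(3/2) : ℝ) := by
    have h0 : Summable fun n : ℕ => (n : ℝ) ^ (-(3/2) : ℝ) :=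
      Real.summable_nat_rpow.2 (by norm_num)
    have h1 := (summable_nat_add_iff 1).2 h0
    apply h1.congr
    intro n
    push_cast
    rfl
  apply Summable.of_nonneg_of_le (fun n => ?_) (fun n => ?_) hb
  · have := cbq_pos n
    positivity
  · have hb0 : (0:ℝ) ≤ ((n : ℝ) + 1) ^ (-(3/2) : ℝ) := Real.rpow_nonneg (by positivity) _
    have hc0 : 0 ≤ cbq n / (4 * (n : ℝ) + 1) := by
      have := cbq_pos n
      positivity
    have hbsq : (((n : ℝ) + 1) ^ (-(3/2) : ℝ)) ^ 2 = (((n : ℝ) + 1) ^ 3)⁻¹ := by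
      rw [← Real.rpow_natCast (((n : ℝ) + 1) ^ (-(3/2) : ℝ)) 2,
        ← Real.rpow_mul (by positivity), show (-(3/2) : ℝ) * (2:ℕ) = ((-3 : ℤ) : ℝ) by
          push_cast; ring, Real.rpow_intCast]
      norm_num
    have hcsq : (cbq n / (4 * (n : ℝ) + 1)) ^ 2 ≤ (((n : ℝ) + 1) ^ 3)⁻¹ := by
      rw [div_pow]
      have h1 := cbq_sq n
      have h2 : (0:ℝ) < 2 * (n:ℝ) + 1 := by positivity
      have h3 : (0:ℝ) < (4 * (n:ℝ) + 1) ^ 2 := by positivity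
      have hpoly : ((n:ℝ) + 1) ^ 3 ≤ (2 * n + 1) * (4 * n + 1) ^ 2 := by
        nlinarith [Nat.cast_nonneg (α := ℝ) n, sq_nonneg ((n:ℝ))]
      rw [div_le_iff₀ h3, inv_mul_eq_div, le_div_iff₀ (by positivity)]
      nlinarith [h1, hpoly, sq_nonneg (cbq n), h3]
    calc cbq n / (4 * (n : ℝ) + 1) = Real.sqrt ((cbq n / (4 * (n : ℝ) + 1)) ^ 2) :=
          (Real.sqrt_sq hc0).symm
      _ ≤ Real.sqrt ((((n : ℝ) + 1) ^ (-(3/2) : ℝ)) ^ 2) :=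
          Real.sqrt_le_sqrt (by rw [hbsq]; exact hcsq)
      _ = _ := Real.sqrt_sq hb0

lemma term_integral (n : ℕ) :
    ∫ t in Set.Ioo (0:ℝ) 1, cbq n * t ^ (4 * n) = cbq n / (4 * (n : ℝ) + 1) := by
  rw [← integral_Ioc_eq_integral_Ioo, ← intervalIntegral.integral_of_le zero_le_one,
    intervalIntegral.integral_const_mul, integral_pow]
  push_cast
  rw [one_pow, zero_pow (by omega)]
  ring

lemma integrable_term (n : ℕ) :
    IntegrableOn (fun t : ℝ => cbq n * t ^ (4 * n)) (Set.Ioo (0:ℝ) 1) := by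
  have hc : ContinuousOn (fun t : ℝ => cbq n * t ^ (4 * n)) (Set.Icc (0:ℝ) 1) :=
    (continuous_const.mul (continuous_pow _)).continuousOn
  exact (hc.integrableOn_Icc).mono_set Set.Ioo_subset_Icc_self

lemma series_eq_integral :
    ∑' n : ℕ, cbq n / (4 * (n : ℝ) + 1)
      = ∫ t in Set.Ioo (0:ℝ) 1, 1 / Real.sqrt (1 - t ^ 4) := by
  have hmeas : ∀ n : ℕ, AEStronglyMeasurable (fun t : ℝ => cbq n * t ^ (4 * n))
      (volume.restrict (Set.Ioo (0:ℝ) 1)) := fun n => (integrable_term n).1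
  have hnorm : ∀ n : ℕ, (∫ t in Set.Ioo (0:ℝ) 1, ‖cbq n * t ^ (4 * n)‖)
      = cbq n / (4 * (n : ℝ) + 1) := by
    intro n
    rw [← term_integral n]
    apply setIntegral_congr_fun measurableSet_Ioo
    intro t ht
    dsimp only
    rw [Real.norm_eq_abs, abs_of_nonneg (mul_nonneg (cbq_pos n).le (pow_nonneg ht.1.le _))]
  have hlin : (∑' n : ℕ, ∫⁻ t in Set.Ioo (0:ℝ) 1, ‖cbq n * t ^ (4 * n)‖₊) ≠ ⊤ := by
    have heq : ∀ n : ℕ, (∫⁻ t in Set.Ioo (0:ℝ) 1, ‖cbq n * t ^ (4 * n)‖₊)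
        = ENNReal.ofReal (cbq n / (4 * (n : ℝ) + 1)) := by
      intro n
      rw [← hnorm n, ofReal_integral_norm_eq_lintegral_enorm (integrable_term n)]; rfl
    simp_rw [heq]
    rw [← ENNReal.ofReal_tsum_of_nonneg (fun n => by have := cbq_pos n; positivity)
      summable_c]
    exact ENNReal.ofReal_ne_top
  have key := MeasureTheory.integral_tsum hmeas hlin
  rw [tsum_congr (fun n => (term_integral n).symm), ← key]
  apply setIntegral_congr_fun measurableSet_Ioo
  intro t ht
  have ht4 : t ^ 4 ∈ Set.Ico (0:ℝ) 1 := by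
    constructor
    · positivity
    · exact pow_lt_one₀ ht.1.le ht.2 (by omega)
  calc ∑' n : ℕ, cbq n * t ^ (4 * n) = ∑' n : ℕ, cbq n * (t ^ 4) ^ n := by
        apply tsum_congr
        intro n
        rw [← pow_mul]
    _ = 1 / Real.sqrt (1 - t ^ 4) := F_eq' ht4

lemma img_pow4 : (fun t : ℝ => t ^ 4) '' Set.Ioo 0 1 = Set.Ioo 0 1 := by
  ext u
  constructor
  · rintro ⟨t, ⟨ht0, ht1⟩, rfl⟩
    exact ⟨by positivity, pow_lt_one₀ ht0.le ht1 (by omega)⟩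
  · rintro ⟨hu0, hu1⟩
    refine ⟨u ^ ((1:ℝ)/4), ⟨Real.rpow_pos_of_pos hu0 _,
      Real.rpow_lt_one hu0.le hu1 (by norm_num)⟩, ?_⟩
    dsimp only
    rw [← Real.rpow_natCast (u ^ ((1:ℝ)/4)) 4, ← Real.rpow_mul hu0.le]
    norm_num

lemma inj_pow4 : Set.InjOn (fun t : ℝ => t ^ 4) (Set.Ioo 0 1) := by
  intro a ha b hb h
  simp only at h
  rcases lt_trichotomy a b with hl | he | hg
  · exact absurd h (ne_of_lt (pow_lt_pow_left₀ hl ha.1.le (by omega)))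
  · exact he
  · exact absurd h.symm (ne_of_lt (pow_lt_pow_left₀ hg hb.1.le (by omega)))

lemma J_eq_4I :
    (∫ u in Set.Ioo (0:ℝ) 1, u ^ (-(3/4) : ℝ) * (1 - u) ^ (-(1/2) : ℝ))
      = 4 * ∫ t in Set.Ioo (0:ℝ) 1, 1 / Real.sqrt (1 - t ^ 4) := by
  have key := integral_image_eq_integral_abs_deriv_smul (f := fun t : ℝ => t ^ 4)
    (f' := fun t : ℝ => 4 * t ^ 3) measurableSet_Ioo
    (fun x _ => by simpa using (hasDerivAt_pow 4 x).hasDerivWithinAt)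
    inj_pow4 (fun u => u ^ (-(3/4) : ℝ) * (1 - u) ^ (-(1/2) : ℝ))
  rw [img_pow4] at key
  rw [key, ← MeasureTheory.integral_const_mul]
  apply setIntegral_congr_fun measurableSet_Ioo
  intro x hx
  obtain ⟨hx0, hx1⟩ := hx
  have hx4 : (0:ℝ) < 1 - x ^ 4 := by
    have := pow_lt_one₀ hx0.le hx1 (show (4:ℕ) ≠ 0 by omega)
    linarith
  dsimp only
  rw [smul_eq_mul, abs_of_pos (by positivity)]
  have h1 : ((x : ℝ) ^ 4) ^ (-(3/4) : ℝ) = (x ^ 3)⁻¹ := by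
    rw [← Real.rpow_natCast x 4, ← Real.rpow_mul hx0.le,
      show ((4:ℕ) : ℝ) * (-(3/4)) = ((-3 : ℤ) : ℝ) by push_cast; ring,
      Real.rpow_intCast]
    norm_num
  have h2 : (1 - x ^ 4) ^ (-(1/2) : ℝ) = 1 / Real.sqrt (1 - x ^ 4) := by
    rw [Real.rpow_neg hx4.le, Real.sqrt_eq_rpow]
    norm_num
  rw [h1, h2]
  field_simp

lemma beta_real :
    Complex.betaIntegral (1/4) (1/2)
      = ((∫ u in Set.Ioo (0:ℝ) 1, u ^ (-(3/4) : ℝ) * (1 - u) ^ (-(1/2) : ℝ) : ℝ) : ℂ) := by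
  rw [Complex.betaIntegral]
  rw [← integral_Ioc_eq_integral_Ioo, ← intervalIntegral.integral_of_le zero_le_one]
  rw [← intervalIntegral.integral_ofReal]
  apply intervalIntegral.integral_congr
  intro x hx
  rw [Set.uIcc_of_le zero_le_one] at hx
  obtain ⟨hx0, hx1⟩ := hx
  push_cast
  rw [Complex.ofReal_cpow hx0, Complex.ofReal_cpow (show (0:ℝ) ≤ 1 - x by linarith)]
  push_cast
  norm_num

lemma gamma_eq :
    Real.Gamma (1/4) * Real.Gamma (1/2)
      = Real.Gamma (3/4) * ∫ u in Set.Ioo (0:ℝ) 1, u ^ (-(3/4) : ℝ) * (1 - u) ^ (-(1/2) : ℝ) := by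
  have key := Complex.Gamma_mul_Gamma_eq_betaIntegral
    (s := 1/4) (t := 1/2) (by norm_num [Complex.div_re]) (by norm_num [Complex.div_re])
  rw [beta_real] at key
  have h1 : ((1:ℂ)/4) = ((1/4 : ℝ) : ℂ) := by norm_num
  have h2 : ((1:ℂ)/2) = ((1/2 : ℝ) : ℂ) := by norm_num
  have h3 : ((1/4 : ℝ) : ℂ) + ((1/2 : ℝ) : ℂ) = ((3/4 : ℝ) : ℂ) := by push_cast; norm_num
  rw [h1, h2, h3, Complex.Gamma_ofReal, Complex.Gamma_ofReal, Complex.Gamma_ofReal] at key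
  rw [← Complex.ofReal_mul, ← Complex.ofReal_mul] at key
  exact_mod_cast key

lemma final :
    (∫ t in Set.Ioo (0:ℝ) 1, 1 / Real.sqrt (1 - t ^ 4))
      = Real.Gamma (1/4) ^ 2 / (4 * Real.sqrt (2 * π)) := by
  have hJ := J_eq_4I
  have hg := gamma_eq
  rw [hJ] at hg
  have hrefl := Real.Gamma_mul_Gamma_one_sub (1/4)
  rw [show (1 : ℝ) - 1/4 = 3/4 by norm_num] at hrefl
  rw [show π * (1/4) = π / 4 by ring, Real.sin_pi_div_four] at hrefl
  have hhalf : Real.Gamma (1/2) = Real.sqrt π := Real.Gamma_one_half_eq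
  have hpi : (0:ℝ) < π := Real.pi_pos
  have h2 : Real.sqrt 2 ^ 2 = 2 := Real.sq_sqrt (by norm_num)
  have hpi2 : Real.sqrt π ^ 2 = π := Real.sq_sqrt hpi.le
  have hs2 : (0:ℝ) < Real.sqrt 2 := Real.sqrt_pos.2 (by norm_num)
  have hsp : (0:ℝ) < Real.sqrt π := Real.sqrt_pos.2 hpi
  have hG14 : (0:ℝ) < Real.Gamma (1/4) := Real.Gamma_pos_of_pos (by norm_num)
  have hG34 : (0:ℝ) < Real.Gamma (3/4) := Real.Gamma_pos_of_pos (by norm_num)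
  have hsplit : Real.sqrt (2 * π) = Real.sqrt 2 * Real.sqrt π := Real.sqrt_mul (by norm_num) π
  -- hrefl : Γ(1/4) * Γ(3/4) = π / (√2 / 2)
  have hrefl' : Real.Gamma (1/4) * Real.Gamma (3/4) = Real.sqrt 2 * π := by
    rw [hrefl]
    rw [div_eq_iff (by positivity)]
    nlinarith [h2]
  rw [hhalf] at hg
  -- hg : Γ(1/4) * √π = Γ(3/4) * (4 * I)
  rw [hsplit, eq_div_iff (by positivity)]
  -- goal : I * (4 * (√2 * √π)) = Γ(1/4)^2
  have hI : (∫ t in Set.Ioo (0:ℝ) 1, 1 / Real.sqrt (1 - t ^ 4))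
      = Real.Gamma (1/4) * Real.sqrt π / (4 * Real.Gamma (3/4)) := by
    rw [eq_div_iff (by positivity)]
    linarith [hg]
  rw [hI]
  field_simp
  linear_combination Real.sqrt 2 * hpi2 - hrefl'

theorem stmt15 :
    ∑' n : ℕ, (1 / 4 : ℝ) ^ n * (Nat.centralBinom n : ℝ) / (4 * (n : ℝ) + 1)
        = Real.Gamma (1 / 4) ^ 2 / (4 * Real.sqrt (2 * π)) ∧
      ∑' n : ℕ, (1 / 4 : ℝ) ^ n * (Nat.centralBinom n : ℝ) / (4 * (n : ℝ) + 1)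
        = ∫ t in (0 : ℝ)..1, 1 / Real.sqrt (1 - t ^ 4) := by
  have hsum : ∑' n : ℕ, (1 / 4 : ℝ) ^ n * (Nat.centralBinom n : ℝ) / (4 * (n : ℝ) + 1)
      = ∑' n : ℕ, cbq n / (4 * (n : ℝ) + 1) := by
    apply tsum_congr
    intro n
    rw [cbq, div_pow, one_pow, div_mul_eq_mul_div, one_mul]
  have hint : (∫ t in (0 : ℝ)..1, 1 / Real.sqrt (1 - t ^ 4))
      = ∫ t in Set.Ioo (0:ℝ) 1, 1 / Real.sqrt (1 - t ^ 4) := by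
    rw [intervalIntegral.integral_of_le zero_le_one, integral_Ioc_eq_integral_Ioo]
  constructor
  · rw [hsum, series_eq_integral, final]
  · rw [hsum, series_eq_integral, hint]
end

section
/- The series ∑_{n=0}^∞ (1/4)^n · binom(2n,n)/(4n+3) equals √(2π^3)/Γ(1/4)^2, and it equals the integral ∫_0^1 t^2/√(1−t^4) dt. -/
open Real MeasureTheory Set

noncomputable def cb (n : ℕ) : ℝ := (Nat.centralBinom n : ℝ) / 4 ^ n

lemma cb_nonneg (n : ℕ) : 0 ≤ cb n := by unfold cb; positivity

lemma cb_zero : cb 0 = 1 := by simp [cb, Nat.centralBinom]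

lemma cb_le_one (n : ℕ) : cb n ≤ 1 := by
  rw [cb, div_le_one (by positivity)]
  have : Nat.centralBinom n ≤ 4 ^ n := by
    unfold Nat.centralBinom
    calc (2*n).choose n ≤ ∑ m ∈ Finset.range (2*n+1), (2*n).choose m :=
          Finset.single_le_sum (fun i _ => Nat.zero_le _) (by simp [Finset.mem_range]; omega)
      _ = 2 ^ (2*n) := Nat.sum_range_choose (2*n)
      _ = 4 ^ n := by rw [pow_mul]; norm_num
  exact_mod_cast this

lemma cb_succ (n : ℕ) : (2 * (n:ℝ) + 2) * cb (n + 1) = (2 * n + 1) * cb n := by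
  have h := Nat.succ_mul_centralBinom_succ n
  have h' : ((n:ℝ) + 1) * (Nat.centralBinom (n+1) : ℝ) = 2 * (2 * n + 1) * Nat.centralBinom n := by
    exact_mod_cast congrArg (Nat.cast : ℕ → ℝ) h
  rw [cb, cb, pow_succ]
  field_simp
  linear_combination 2 * h'

lemma cb_sq (n : ℕ) : (2 * (n:ℝ) + 1) * cb n ^ 2 ≤ 1 := by
  induction n with
  | zero => simp [cb_zero]
  | succ n ih =>
    have h := cb_succ n
    have h1 := cb_nonneg n
    have hsq : ((2*(n:ℝ)+2) * cb (n+1))^2 = ((2*(n:ℝ)+1) * cb n)^2 := by rw [h]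
    have key : ((2*(n:ℝ)+2))^2 * ((2*((n:ℕ)+1:ℕ) + 1 : ℝ) * cb (n+1)^2) ≤ ((2*(n:ℝ)+2))^2 := by
      push_cast
      nlinarith [ih, sq_nonneg (cb n)]
    have hpos : (0:ℝ) < ((2*(n:ℝ)+2))^2 := by positivity
    have := (mul_le_mul_iff_right₀ hpos).mp (by linarith [key] :
      ((2*(n:ℝ)+2))^2 * ((2*((n:ℕ)+1:ℕ) + 1 : ℝ) * cb (n+1)^2) ≤ ((2*(n:ℝ)+2))^2 * 1)
    push_cast at this ⊢
    linarith

lemma summable_cb : Summable (fun n : ℕ => cb n / (4 * (n:ℝ) + 3)) := by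
  have hs : Summable (fun n : ℕ => ((n:ℝ)+1) ^ (-(3/2) : ℝ)) := by
    have := Real.summable_nat_rpow (p := -(3/2 : ℝ)) |>.2 (by norm_num)
    exact_mod_cast (summable_nat_add_iff 1).2 this
  apply Summable.of_nonneg_of_le
    (fun n => div_nonneg (cb_nonneg n) (by positivity)) (fun n => ?_) hs
  have h1 : (0:ℝ) ≤ cb n / (4 * n + 3) := div_nonneg (cb_nonneg n) (by positivity)
  have h2 : (0:ℝ) < ((n:ℝ)+1) ^ (-(3/2) : ℝ) := by positivity
  have key : cb n ^ 2 * ((n:ℝ)+1)^3 ≤ (4*(n:ℝ)+3)^2 := by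
    have hA := mul_le_mul_of_nonneg_right (cb_sq n) (show (0:ℝ) ≤ ((n:ℝ)+1)^3 by positivity)
    have hB : ((n:ℝ)+1)^3 ≤ (2*(n:ℝ)+1) * (4*(n:ℝ)+3)^2 := by nlinarith [Nat.cast_nonneg (α := ℝ) n]
    nlinarith [Nat.cast_nonneg (α := ℝ) n, sq_nonneg (cb n)]
  have hsq : (cb n / (4 * (n:ℝ) + 3))^2 ≤ (((n:ℝ)+1) ^ (-(3/2) : ℝ))^2 := by
    have e2 : (((n:ℝ)+1) ^ (-(3/2) : ℝ))^2 = (((n:ℝ)+1)^(3:ℕ))⁻¹ := by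
      rw [← Real.rpow_natCast (((n:ℝ)+1) ^ (-(3/2) : ℝ)) 2, ← Real.rpow_mul (by positivity)]
      norm_num
    rw [e2, div_pow, div_le_iff₀ (by positivity), inv_mul_eq_div, le_div_iff₀ (by positivity)]
    linarith [key]
  nlinarith [hsq, h1, h2.le]

lemma summable_cbx {x : ℝ} (h : |x| < 1) : Summable (fun n : ℕ => cb n * x ^ n) := by
  apply Summable.of_norm_bounded (summable_geometric_of_lt_one (abs_nonneg x) h)
  intro n
  rw [norm_mul, norm_pow, Real.norm_eq_abs, Real.norm_eq_abs, abs_of_nonneg (cb_nonneg n)]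
  exact mul_le_of_le_one_left (by positivity) (cb_le_one n)

lemma cb_tsum_eq {x : ℝ} (h0 : 0 ≤ x) (h1 : x < 1) :
    ∑' n : ℕ, cb n * x ^ n = (Real.sqrt (1 - x))⁻¹ := by
  set r : ℝ := (1 + x)/2 with hrdef
  have hr0 : 0 < r := by simp only [hrdef]; linarith
  have hr1 : r < 1 := by simp only [hrdef]; linarith
  have hxr : x < r := by simp only [hrdef]; linarith
  set t : Set ℝ := Ioo (-r) r with htdef
  have ht : IsOpen t := isOpen_Ioo
  have h't : IsPreconnected t := (convex_Ioo _ _).isPreconnected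
  have hu : Summable (fun n : ℕ => (n:ℝ) * r ^ (n - 1)) := by
    rw [← summable_nat_add_iff 1]
    have hs1 : Summable (fun n : ℕ => (n:ℝ) * r ^ n + r ^ n) :=
      (summable_pow_mul_geometric_of_norm_lt_one 1
        (by rwa [Real.norm_eq_abs, abs_of_pos hr0])).congr (by intro n; push_cast; ring) |>.add
        (summable_geometric_of_lt_one hr0.le hr1)
    exact hs1.congr (by intro n; push_cast [Nat.add_sub_cancel]; ring)
  have habs : ∀ y ∈ t, |y| < r := fun y hy => abs_lt.2 ⟨by linarith [hy.1], hy.2⟩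
  have hbound : ∀ (n : ℕ), ∀ y ∈ t, ‖cb n * ((n:ℝ) * y ^ (n - 1))‖ ≤ (n:ℝ) * r ^ (n - 1) := by
    intro n y hy
    rw [Real.norm_eq_abs, abs_mul, abs_mul, abs_pow, abs_of_nonneg (cb_nonneg n),
      Nat.abs_cast]
    calc cb n * ((n:ℝ) * |y| ^ (n-1)) ≤ 1 * ((n:ℝ) * r ^ (n-1)) := by
          apply mul_le_mul (cb_le_one n) ?_ (by positivity) zero_le_one
          exact mul_le_mul_of_nonneg_left
            (pow_le_pow_left₀ (abs_nonneg y) (habs y hy).le _) (Nat.cast_nonneg n)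
      _ = (n:ℝ) * r ^ (n-1) := one_mul _
  have hg0 : Summable (fun n : ℕ => cb n * (0:ℝ) ^ n) :=
    summable_cbx (by simp : |(0:ℝ)| < 1)
  have key : ∀ y ∈ t, HasDerivAt (fun z : ℝ => ∑' n : ℕ, cb n * z ^ n)
      (∑' n : ℕ, cb n * ((n:ℝ) * y ^ (n - 1))) y := by
    intro y hy
    exact hasDerivAt_tsum_of_isPreconnected hu ht h't
      (fun n z _ => (hasDerivAt_pow n z).const_mul (cb n)) hbound
      (⟨by linarith, hr0⟩ : (0:ℝ) ∈ t) hg0 hy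
  have ode : ∀ y ∈ t, (1 - y) * (∑' n : ℕ, cb n * ((n:ℝ) * y ^ (n - 1)))
      = (∑' n : ℕ, cb n * y ^ n) / 2 := by
    intro y hy
    have hy1 : |y| < 1 := (habs y hy).trans hr1
    have S2 : Summable (fun n : ℕ => cb n * y ^ n) := summable_cbx hy1
    have S1 : Summable (fun n : ℕ => cb n * ((n:ℝ) * y ^ (n - 1))) :=
      Summable.of_norm_bounded hu (fun n => hbound n y hy)
    have S3 : Summable (fun n : ℕ => (n:ℝ) * (cb n * y ^ n)) := by
      apply Summable.of_norm_bounded (summable_pow_mul_geometric_of_norm_lt_one 1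
        (by rwa [Real.norm_eq_abs, abs_of_nonneg (abs_nonneg y)] : ‖|y|‖ < 1))
      intro n
      rw [Real.norm_eq_abs, abs_mul, abs_mul, abs_pow, abs_of_nonneg (cb_nonneg n), Nat.abs_cast]
      calc (n:ℝ) * (cb n * |y| ^ n) ≤ (n:ℝ) * (1 * |y| ^ n) := by
            apply mul_le_mul_of_nonneg_left
              (mul_le_mul_of_nonneg_right (cb_le_one n) (by positivity)) (Nat.cast_nonneg n)
        _ = (n:ℝ)^1 * |y| ^ n := by ring
    have e1 : ∑' n : ℕ, cb n * ((n:ℝ) * y ^ (n - 1))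
        = ∑' n : ℕ, cb (n+1) * (((n:ℝ)+1) * y ^ n) := by
      rw [Summable.tsum_eq_zero_add S1]
      push_cast [Nat.add_sub_cancel]
      simp
    have e2 : ∀ n : ℕ, cb (n+1) * (((n:ℝ)+1) * y ^ n)
        = (n:ℝ) * (cb n * y ^ n) + (cb n * y ^ n) / 2 := by
      intro n
      have h := cb_succ n
      have h2 : cb (n+1) * ((n:ℝ)+1) = (2*(n:ℝ)+1) * cb n / 2 := by linarith
      calc cb (n+1) * (((n:ℝ)+1) * y ^ n) = (cb (n+1) * ((n:ℝ)+1)) * y ^ n := by ring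
        _ = ((2*(n:ℝ)+1) * cb n / 2) * y ^ n := by rw [h2]
        _ = (n:ℝ) * (cb n * y ^ n) + (cb n * y ^ n) / 2 := by ring
    have e3 : y * (∑' n : ℕ, cb n * ((n:ℝ) * y ^ (n - 1)))
        = ∑' n : ℕ, (n:ℝ) * (cb n * y ^ n) := by
      rw [← tsum_mul_left]
      apply tsum_congr
      intro n
      cases n with
      | zero => simp
      | succ m => push_cast [Nat.add_sub_cancel, pow_succ]; ring
    have e4 : ∑' n : ℕ, cb n * ((n:ℝ) * y ^ (n - 1))
        = (∑' n : ℕ, (n:ℝ) * (cb n * y ^ n)) + (∑' n : ℕ, cb n * y ^ n) / 2 := by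
      rw [e1, tsum_congr e2, Summable.tsum_add S3 (S2.div_const 2), tsum_div_const]
    linarith [e3, e4]
  have hφ : ∀ y ∈ Icc 0 x, HasDerivAt
      (fun z : ℝ => (∑' n : ℕ, cb n * z ^ n) * Real.sqrt (1 - z)) 0 y := by
    intro y hy
    have hyt : y ∈ t := ⟨by linarith [hy.1], by linarith [hy.2]⟩
    have h1y : 0 < 1 - y := by linarith [hy.2]
    have hf := key y hyt
    have hsqrt : HasDerivAt (fun z : ℝ => Real.sqrt (1 - z))
        (1 / (2 * Real.sqrt (1 - y)) * (-1)) y :=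
      (Real.hasDerivAt_sqrt h1y.ne').comp y ((hasDerivAt_id y).const_sub 1)
    have hmul := hf.mul hsqrt
    refine hmul.congr_deriv (Eq.symm ?_)
    have hode := ode y hyt
    have hs0 : Real.sqrt (1 - y) ≠ 0 := (Real.sqrt_pos.2 h1y).ne'
    have hs2 : Real.sqrt (1 - y) ^ 2 = 1 - y := Real.sq_sqrt h1y.le
    set f := ∑' n : ℕ, cb n * y ^ n
    set f' := ∑' n : ℕ, cb n * ((n:ℝ) * y ^ (n - 1))
    have hf'eq : f' = f / (2 * Real.sqrt (1 - y) ^ 2) := by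
      field_simp at hode ⊢
      rw [hs2]
      linarith [hode]
    rw [eq_comm, hf'eq]
    field_simp
    ring
  have hconst := constant_of_has_deriv_right_zero
    (f := fun z : ℝ => (∑' n : ℕ, cb n * z ^ n) * Real.sqrt (1 - z)) (a := 0) (b := x)
    (fun y hy => ((hφ y hy).continuousAt.continuousWithinAt))
    (fun y hy => (hφ y (Ico_subset_Icc_self hy)).hasDerivWithinAt)
    x (right_mem_Icc.2 h0)
  have hzero : (∑' n : ℕ, cb n * (0:ℝ) ^ n) * Real.sqrt (1 - 0) = 1 := by
    rw [tsum_eq_single 0 (fun n hn => by simp [zero_pow hn])]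
    simp [cb_zero]
  beta_reduce at hconst
  rw [hzero] at hconst
  have hs0 : Real.sqrt (1 - x) ≠ 0 := (Real.sqrt_pos.2 (by linarith)).ne'
  field_simp
  linarith [hconst]

lemma cb_pointwise {t : ℝ} (ht : t ∈ Ioo (0:ℝ) 1) :
    ∑' n : ℕ, cb n * t ^ (4*n+2) = t^2 / Real.sqrt (1 - t^4) := by
  have h4 : (0:ℝ) ≤ t^4 := by positivity
  have h4' : t^4 < 1 := pow_lt_one₀ ht.1.le ht.2 (by norm_num)
  calc ∑' n : ℕ, cb n * t ^ (4*n+2) = ∑' n : ℕ, (cb n * (t^4)^n) * t^2 := by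
        apply tsum_congr; intro n
        rw [← pow_mul, mul_assoc, ← pow_add]
    _ = (∑' n : ℕ, cb n * (t^4)^n) * t^2 := tsum_mul_right
    _ = (Real.sqrt (1 - t^4))⁻¹ * t^2 := by rw [cb_tsum_eq h4 h4']
    _ = t^2 / Real.sqrt (1-t^4) := by rw [div_eq_mul_inv, mul_comm]

lemma int_mono (n : ℕ) :
    ∫ t in Ioo (0:ℝ) 1, cb n * t ^ (4*n+2) = cb n / (4*(n:ℝ)+3) := by
  rw [← integral_Ioc_eq_integral_Ioo, ← intervalIntegral.integral_of_le zero_le_one,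
    intervalIntegral.integral_const_mul, integral_pow]
  push_cast
  norm_num
  ring

lemma integrable_mono (n : ℕ) :
    IntegrableOn (fun t : ℝ => cb n * t ^ (4*n+2)) (Ioo 0 1) volume :=
  ((continuous_const.mul (continuous_pow _)).integrableOn_Icc (a := 0) (b := 1)).mono_set
    Ioo_subset_Icc_self

lemma sum_eq_int :
    ∑' n : ℕ, cb n / (4*(n:ℝ)+3) = ∫ t in Ioo (0:ℝ) 1, t^2 / Real.sqrt (1 - t^4) := by
  have hnn : ∀ (n : ℕ) (t : ℝ), 0 ≤ cb n * t ^ (4*n+2) := by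
    intro n t
    have : t ^ (4*n+2) = (t^(2*n+1))^2 := by rw [← pow_mul]; ring_nf
    rw [this]
    exact mul_nonneg (cb_nonneg n) (sq_nonneg _)
  have hlin : ∀ n : ℕ, ∫⁻ t in Ioo (0:ℝ) 1, ‖cb n * t ^ (4*n+2)‖ₑ
      = ENNReal.ofReal (cb n / (4*(n:ℝ)+3)) := by
    intro n
    rw [← int_mono n,
      ofReal_integral_eq_lintegral_ofReal (integrable_mono n) (ae_of_all _ (fun t => hnn n t))]
    exact lintegral_congr fun t => Real.enorm_eq_ofReal (hnn n t)
  have hswap := integral_tsum (μ := volume.restrict (Ioo (0:ℝ) 1))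
    (f := fun (n : ℕ) (t : ℝ) => cb n * t ^ (4*n+2))
    (fun n => (continuous_const.mul (continuous_pow _)).aestronglyMeasurable)
    (by
      simp only [hlin]
      rw [← ENNReal.ofReal_tsum_of_nonneg
        (fun n => div_nonneg (cb_nonneg n) (by positivity)) summable_cb]
      exact ENNReal.ofReal_ne_top)
  calc ∑' n : ℕ, cb n / (4*(n:ℝ)+3)
      = ∑' n : ℕ, ∫ t in Ioo (0:ℝ) 1, cb n * t ^ (4*n+2) := by
        exact (tsum_congr int_mono).symm
    _ = ∫ t in Ioo (0:ℝ) 1, ∑' n : ℕ, cb n * t ^ (4*n+2) := hswap.symm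
    _ = ∫ t in Ioo (0:ℝ) 1, t^2 / Real.sqrt (1 - t^4) :=
        setIntegral_congr_fun measurableSet_Ioo (fun t ht => cb_pointwise ht)

lemma beta_val : ∫ u in (0:ℝ)..1, u^(-(1/4):ℝ) * (1-u)^(-(1/2):ℝ)
    = Real.Gamma (3/4) * Real.Gamma (1/2) / Real.Gamma (5/4) := by
  have h := Complex.Gamma_mul_Gamma_eq_betaIntegral (s := 3/4) (t := 1/2)
    (by norm_num) (by norm_num)
  have hB : Complex.betaIntegral (3/4) (1/2)
      = ((∫ u in (0:ℝ)..1, u^(-(1/4):ℝ) * (1-u)^(-(1/2):ℝ) : ℝ) : ℂ) := by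
    rw [Complex.betaIntegral, ← intervalIntegral.integral_ofReal]
    apply intervalIntegral.integral_congr
    intro x hx
    have hx' : x ∈ Icc (0:ℝ) 1 := by rwa [uIcc_of_le zero_le_one] at hx
    beta_reduce
    rw [Complex.ofReal_mul, Complex.ofReal_cpow hx'.1,
      Complex.ofReal_cpow (by linarith [hx'.2] : (0:ℝ) ≤ 1 - x)]
    push_cast
    norm_num
  rw [hB] at h
  have h2 : ((3:ℂ)/4 + 1/2) = ((5/4 : ℝ) : ℂ) := by norm_num
  rw [h2] at h
  have h3 : ((3:ℂ)/4) = ((3/4 : ℝ) : ℂ) := by norm_num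
  have h4 : ((1:ℂ)/2) = ((1/2 : ℝ) : ℂ) := by norm_num
  rw [h3, h4, Complex.Gamma_ofReal, Complex.Gamma_ofReal, Complex.Gamma_ofReal] at h
  rw [← Complex.ofReal_mul, ← Complex.ofReal_mul] at h
  have h5 := Complex.ofReal_inj.1 h
  have hG : Real.Gamma (5/4) ≠ 0 := (Real.Gamma_pos_of_pos (by norm_num)).ne'
  field_simp
  linarith [h5]

lemma cov : ∫ t in Ioo (0:ℝ) 1, t^2 / Real.sqrt (1-t^4)
    = ∫ u in Ioo (0:ℝ) 1, (1/4 : ℝ) * (u^(-(1/4):ℝ) * (1-u)^(-(1/2):ℝ)) := by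
  have himg : (fun t : ℝ => t^4) '' Ioo 0 1 = Ioo 0 1 := by
    ext u
    constructor
    · rintro ⟨t, ht, rfl⟩
      exact ⟨by have := ht.1; positivity, pow_lt_one₀ ht.1.le ht.2 (by norm_num)⟩
    · intro hu
      refine ⟨u ^ ((1/4 : ℝ)), ⟨Real.rpow_pos_of_pos hu.1 _,
        Real.rpow_lt_one hu.1.le hu.2 (by norm_num)⟩, ?_⟩
      show (u ^ ((1/4):ℝ)) ^ (4:ℕ) = u
      rw [← Real.rpow_natCast (u ^ ((1/4):ℝ)) 4, ← Real.rpow_mul hu.1.le]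
      norm_num
  have hder : ∀ t ∈ Ioo (0:ℝ) 1, HasDerivWithinAt (fun t : ℝ => t^4) ((4:ℝ) * t^3) (Ioo 0 1) t := by
    intro t ht
    simpa using (hasDerivAt_pow 4 t).hasDerivWithinAt
  have hinj : InjOn (fun t : ℝ => t^4) (Ioo 0 1) := by
    have := pow_left_strictMonoOn₀ (M₀ := ℝ) (n := 4) (by norm_num)
    exact (this.injOn).mono (fun t ht => ht.1.le)
  have hcv := integral_image_eq_integral_abs_deriv_smul measurableSet_Ioo hder hinj
      (fun u => (1/4 : ℝ) * (u^(-(1/4):ℝ) * (1-u)^(-(1/2):ℝ)))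
  rw [himg] at hcv
  rw [hcv]
  apply setIntegral_congr_fun measurableSet_Ioo
  intro t ht
  beta_reduce
  have h1 : (0:ℝ) < t := ht.1
  have h2 : t^4 < 1 := pow_lt_one₀ ht.1.le ht.2 (by norm_num)
  have h3 : (0:ℝ) < 1 - t^4 := by linarith
  rw [smul_eq_mul, abs_of_pos (by positivity)]
  have e1 : ((t^4 : ℝ)^(-(1/4):ℝ)) = t⁻¹ := by
    rw [← Real.rpow_natCast t 4, ← Real.rpow_mul h1.le]
    norm_num
    exact Real.rpow_neg_one t
  have e2 : ((1-t^4 : ℝ)^(-(1/2):ℝ)) = (Real.sqrt (1-t^4))⁻¹ := by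
    rw [Real.rpow_neg h3.le, Real.sqrt_eq_rpow]
  rw [e1, e2]
  have hs : Real.sqrt (1-t^4) ≠ 0 := (Real.sqrt_pos.2 h3).ne'
  field_simp

lemma int_val : ∫ t in Ioo (0:ℝ) 1, t^2 / Real.sqrt (1-t^4)
    = Real.sqrt (2 * π ^ 3) / Real.Gamma (1/4) ^ 2 := by
  have h1 : ∫ t in Ioo (0:ℝ) 1, t^2 / Real.sqrt (1-t^4)
      = (1/4 : ℝ) * (Real.Gamma (3/4) * Real.Gamma (1/2) / Real.Gamma (5/4)) := by
    rw [cov, ← beta_val, intervalIntegral.integral_of_le zero_le_one,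
      integral_Ioc_eq_integral_Ioo, ← MeasureTheory.integral_const_mul]
  rw [h1]
  have hG54 : Real.Gamma (5/4) = (1/4) * Real.Gamma (1/4) := by
    rw [show (5/4 : ℝ) = 1/4 + 1 by norm_num, Real.Gamma_add_one (by norm_num)]
  have hG12 : Real.Gamma (1/2) = Real.sqrt π := Real.Gamma_one_half_eq
  have hprod : Real.Gamma (1/4) * Real.Gamma (3/4) = Real.sqrt 2 * π := by
    have := Real.Gamma_mul_Gamma_one_sub (1/4)
    rw [show (1:ℝ) - 1/4 = 3/4 by norm_num, show π * (1/4) = π/4 by ring,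
      Real.sin_pi_div_four] at this
    rw [this, div_eq_iff (by positivity)]
    have h2 : Real.sqrt 2 * Real.sqrt 2 = 2 := Real.mul_self_sqrt (by norm_num)
    nlinarith [h2, Real.sqrt_nonneg 2, Real.pi_pos]
  have hsqrt : Real.sqrt (2 * π ^ 3) = Real.sqrt 2 * (π * Real.sqrt π) := by
    rw [Real.sqrt_mul (by norm_num), show (π:ℝ)^3 = π^2 * π by ring,
      Real.sqrt_mul (sq_nonneg π), Real.sqrt_sq Real.pi_pos.le]
  rw [hsqrt, hG54, hG12]
  have hG14 : Real.Gamma (1/4) ≠ 0 := (Real.Gamma_pos_of_pos (by norm_num)).ne'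
  field_simp
  linear_combination hprod

theorem stmt16 :
    ∑' n : ℕ, (1 / 4 : ℝ) ^ n * (Nat.centralBinom n : ℝ) / (4 * (n : ℝ) + 3)
        = Real.sqrt (2 * π ^ 3) / Real.Gamma (1 / 4) ^ 2 ∧
      ∑' n : ℕ, (1 / 4 : ℝ) ^ n * (Nat.centralBinom n : ℝ) / (4 * (n : ℝ) + 3)
        = ∫ t in (0 : ℝ)..1, t ^ 2 / Real.sqrt (1 - t ^ 4) := by
  have hterm : ∀ n : ℕ, (1 / 4 : ℝ) ^ n * (Nat.centralBinom n : ℝ) / (4 * (n : ℝ) + 3)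
      = cb n / (4 * (n:ℝ) + 3) := by
    intro n
    rw [cb, one_div, inv_pow, inv_mul_eq_div]
  have key : ∑' n : ℕ, (1 / 4 : ℝ) ^ n * (Nat.centralBinom n : ℝ) / (4 * (n : ℝ) + 3)
      = ∫ t in Ioo (0:ℝ) 1, t^2 / Real.sqrt (1 - t^4) := by
    rw [tsum_congr hterm, sum_eq_int]
  constructor
  · rw [key, int_val]
  · rw [key, intervalIntegral.integral_of_le zero_le_one, integral_Ioc_eq_integral_Ioo]
end

section
/- For every natural number n, ∫_0^1 u^{n+1/2} ln(1−u) du = (4 ln 2 − 4 O_{n+1} − 4/(2n+3))/(2n+3). -/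
open Real

open Finset Filter Set Topology MeasureTheory intervalIntegral

noncomputable def G0 (n : ℕ) (s : ℝ) : ℝ :=
  (2/(2*(n:ℝ)+3)) * ((s^(2*n+3) - 1) * Real.log (1 - s^2))
  - (4/(2*(n:ℝ)+3)) * ((∑ j ∈ range (n+1), s^(2*j+3)/(2*(j:ℝ)+3)) + s - Real.log (1+s))


-- geometric-type identity
lemma oddsum_id (n : ℕ) (s : ℝ) :
    (1 + s) * (∑ j ∈ range (n+1), s ^ (2*j+1)) + 1 = ∑ k ∈ range (2*n+3), s ^ k := by
  induction n with
  | zero => simp [Finset.sum_range_succ]; ring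
  | succ m ih =>
      rw [show 2*(m+1)+3 = (2*m+3)+1+1 by ring]
      rw [Finset.sum_range_succ (n := m+1), Finset.sum_range_succ (n := (2*m+3)+1),
        Finset.sum_range_succ (n := 2*m+3), ← ih]
      ring

lemma hS2 (n : ℕ) (s : ℝ) :
    (1 - s^2) * (∑ j ∈ range (n+1), s ^ (2*j+1)) = s - s^(2*n+3) := by
  have h1 := oddsum_id n s
  have h2 := geom_sum_mul s (2*n+3)
  linear_combination (1 - s) * h1 - h2

lemma G0_deriv (n : ℕ) (s : ℝ) (h0 : 0 < s) (h1 : s < 1) :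
    HasDerivAt (G0 n) (2 * s^(2*n+2) * Real.log (1 - s^2)) s := by
  have hs2 : (1:ℝ) - s^2 ≠ 0 := by nlinarith
  have hps : (1:ℝ) + s ≠ 0 := by nlinarith
  have hM : (2*(n:ℝ)+3) ≠ 0 := by positivity
  have hA : HasDerivAt (fun s : ℝ => s^(2*n+3) - 1) ((2*(n:ℝ)+3) * s^(2*n+2)) s := by
    have := (hasDerivAt_pow (2*n+3) s).sub_const 1
    refine this.congr_deriv ?_
    push_cast; ring_nf
  have hB : HasDerivAt (fun s : ℝ => Real.log (1 - s^2)) (-(2*s)/(1-s^2)) s := by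
    have h' : HasDerivAt (fun s : ℝ => 1 - s^2) (-(2*s)) s := by
      have := (hasDerivAt_pow 2 s).const_sub 1
      refine this.congr_deriv ?_
      push_cast; ring
    exact h'.log hs2
  have hC : HasDerivAt (fun s : ℝ => ∑ j ∈ range (n+1), s^(2*j+3)/(2*(j:ℝ)+3))
      (∑ j ∈ range (n+1), s^(2*j+2)) s := by
    apply HasDerivAt.fun_sum
    intro j _
    have hj : (2*(j:ℝ)+3) ≠ 0 := by positivity
    have := (hasDerivAt_pow (2*j+3) s).div_const (2*(j:ℝ)+3)
    refine this.congr_deriv ?_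
    push_cast
    field_simp
  have hL : HasDerivAt (fun s : ℝ => Real.log (1+s)) (1/(1+s)) s := by
    have h' : HasDerivAt (fun s : ℝ => 1+s) 1 s := (hasDerivAt_id s).const_add 1
    simpa using h'.log hps
  have hG : HasDerivAt (G0 n)
      ((2/(2*(n:ℝ)+3)) * (((2*(n:ℝ)+3) * s^(2*n+2)) * Real.log (1-s^2) + (s^(2*n+3)-1) * (-(2*s)/(1-s^2)))
      - (4/(2*(n:ℝ)+3)) * ((∑ j ∈ range (n+1), s^(2*j+2)) + 1 - 1/(1+s))) s := by
    exact ((hA.mul hB).const_mul _).sub ((((hC.add (hasDerivAt_id s)).sub hL).const_mul _))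
  convert hG using 1
  have hsum : (∑ j ∈ range (n+1), s^(2*j+2)) = s * ∑ j ∈ range (n+1), s^(2*j+1) := by
    rw [Finset.mul_sum]
    exact Finset.sum_congr rfl fun j _ => by ring
  rw [hsum]
  set S := ∑ j ∈ range (n+1), s ^ (2*j+1) with hSdef
  have h2 := hS2 n s
  have e1 : (s^(2*n+3)-1) * (-(2*s)/(1-s^2)) = 2*s/(1+s) + 2*s*S := by
    have hrw : s^(2*n+3) = s - (1-s^2)*S := by linear_combination h2
    rw [hrw]
    field_simp
    ring
  rw [e1]
  field_simp
  ring

lemma G0_cont (n : ℕ) : ContinuousOn (G0 n) (Set.Icc 0 1) := by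
  have hrest : ContinuousOn (fun s : ℝ =>
      (4/(2*(n:ℝ)+3)) * ((∑ j ∈ range (n+1), s^(2*j+3)/(2*(j:ℝ)+3)) + s - Real.log (1+s)))
      (Set.Icc 0 1) := by
    apply ContinuousOn.mul continuousOn_const
    apply ContinuousOn.sub
    · exact ContinuousOn.add (Continuous.continuousOn (by continuity)) continuousOn_id
    · exact ContinuousOn.log (by fun_prop) (fun s hs => by nlinarith [hs.1])
  have hmain : ContinuousOn (fun s : ℝ => (s^(2*n+3) - 1) * Real.log (1 - s^2))
      (Set.Icc 0 1) := by
    intro s hs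
    rcases eq_or_lt_of_le hs.2 with rfl | hlt
    · -- s = 1
      have key : Tendsto (fun s : ℝ => (s^(2*n+3) - 1) * Real.log (1 - s^2))
          (𝓝[Set.Icc (0:ℝ) 1] 1) (𝓝 0) := by
        apply squeeze_zero_norm'
          (a := fun s : ℝ => (2*(n:ℝ)+3) * |(1-s) * Real.log (1 - s^2)|)
        · apply eventually_nhdsWithin_of_forall
          intro x hx
          have hx0 := hx.1
          have hx1 := hx.2
          have hpow : x^(2*n+3) ≤ 1 := pow_le_one₀ hx0 hx1
          have habs : |x^(2*n+3) - 1| ≤ (2*(n:ℝ)+3) * (1-x) := by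
            rw [abs_of_nonpos (by linarith), neg_sub]
            have hgs : 1 - x^(2*n+3) = (∑ i ∈ range (2*n+3), x^i) * (1-x) := by
              linear_combination geom_sum_mul x (2*n+3)
            rw [hgs]
            have hsum : (∑ i ∈ range (2*n+3), x^i) ≤ (2*(n:ℝ)+3) := by
              calc (∑ i ∈ range (2*n+3), x^i) ≤ ∑ i ∈ range (2*n+3), (1:ℝ) :=
                    Finset.sum_le_sum (fun i _ => pow_le_one₀ hx0 hx1)
                _ = (2*(n:ℝ)+3) := by simp
            have : (0:ℝ) ≤ ∑ i ∈ range (2*n+3), x^i :=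
              Finset.sum_nonneg fun i _ => pow_nonneg hx0 i
            nlinarith
          calc ‖(x^(2*n+3) - 1) * Real.log (1 - x^2)‖
              = |x^(2*n+3) - 1| * |Real.log (1 - x^2)| := abs_mul _ _
            _ ≤ ((2*(n:ℝ)+3) * (1-x)) * |Real.log (1 - x^2)| := by
                apply mul_le_mul_of_nonneg_right habs (abs_nonneg _)
            _ = (2*(n:ℝ)+3) * |(1-x) * Real.log (1 - x^2)| := by
                rw [abs_mul, abs_of_nonneg (by linarith : (0:ℝ) ≤ 1 - x)]; ring
        · have hk : Tendsto (fun s : ℝ => (1-s) * Real.log (1-s) + (1-s) * Real.log (1+s))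
              (𝓝 (1:ℝ)) (𝓝 0) := by
            have h1 : Continuous fun s : ℝ => (1-s) * Real.log (1-s) :=
              Real.continuous_mul_log.comp (continuous_const.sub continuous_id)
            have h2 : ContinuousAt (fun s : ℝ => (1-s) * Real.log (1+s)) 1 := by
              apply ContinuousAt.mul (by fun_prop)
              exact ContinuousAt.log (by fun_prop) (by norm_num)
            have := (h1.continuousAt (x := 1)).fun_add h2
            simpa using this.tendsto
          have heq : ∀ x ∈ Set.Icc (0:ℝ) 1,
              (1-x) * Real.log (1-x) + (1-x) * Real.log (1+x) = (1-x) * Real.log (1 - x^2) := by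
            intro x hx
            rcases eq_or_lt_of_le hx.2 with rfl | hlt
            · norm_num
            · have hne1 : (1:ℝ) - x ≠ 0 := by linarith
              have hne2 : (1:ℝ) + x ≠ 0 := by nlinarith [hx.1]
              rw [show (1:ℝ) - x^2 = (1-x)*(1+x) by ring, Real.log_mul hne1 hne2]
              ring
          have hh : Tendsto (fun s : ℝ => (1-s) * Real.log (1 - s^2))
              (𝓝[Set.Icc (0:ℝ) 1] 1) (𝓝 0) := by
            refine Tendsto.congr' ?_ (hk.mono_left nhdsWithin_le_nhds)
            exact eventually_nhdsWithin_of_forall heq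
          have := (hh.abs.const_mul (2*(n:ℝ)+3))
          simpa using this
      have hval : ((1:ℝ)^(2*n+3) - 1) * Real.log (1 - (1:ℝ)^2) = 0 := by norm_num
      unfold ContinuousWithinAt
      convert key using 2
    · -- s < 1
      have h2 : ContinuousAt (fun s : ℝ => Real.log (1 - s^2)) s := by
        apply ContinuousAt.log (by fun_prop)
        nlinarith [hs.1]
      have h1 : ContinuousAt (fun s : ℝ => s^(2*n+3) - 1) s := by fun_prop
      exact (h1.mul h2).continuousWithinAt
  have hcomb : ContinuousOn (fun s : ℝ =>
      (2/(2*(n:ℝ)+3)) * ((s^(2*n+3) - 1) * Real.log (1 - s^2))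
      - (4/(2*(n:ℝ)+3)) * ((∑ j ∈ range (n+1), s^(2*j+3)/(2*(j:ℝ)+3)) + s - Real.log (1+s)))
      (Set.Icc 0 1) := (hmain.const_smul (2/(2*(n:ℝ)+3))).sub hrest
  exact hcomb.congr (fun s _ => rfl)


lemma f_integrable (n : ℕ) :
    IntervalIntegrable (fun u : ℝ => u ^ ((n:ℝ) + 1/2) * Real.log (1-u)) volume 0 1 := by
  have h1 : IntervalIntegrable (fun x : ℝ => x ^ (-(1/2) : ℝ)) volume 0 1 :=
    intervalIntegrable_rpow' (by norm_num)
  have h2 := (h1.comp_sub_left 1).symm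
  have hg : IntervalIntegrable (fun u : ℝ => 2 * (1-u) ^ (-(1/2) : ℝ)) volume 0 1 := by
    simpa using h2.const_mul 2
  apply hg.mono_fun'
  · apply Measurable.aestronglyMeasurable
    apply Measurable.mul
    · exact (Real.continuous_rpow_const (by positivity)).measurable
    · exact (measurable_const.sub measurable_id).log
  · rw [Filter.EventuallyLE, ae_restrict_iff' measurableSet_uIoc]
    apply ae_of_all
    intro u hu
    rw [Set.uIoc_of_le (by norm_num : (0:ℝ) ≤ 1)] at hu
    rcases eq_or_lt_of_le hu.2 with rfl | hlt
    · simp [Real.log_zero]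
    · have h1u : 0 < 1 - u := by linarith
      have hu0 : 0 < u := hu.1
      have hb1 : |u ^ ((n:ℝ) + 1/2)| ≤ 1 := by
        rw [abs_of_nonneg (Real.rpow_nonneg hu0.le _)]
        exact Real.rpow_le_one hu0.le (by linarith) (by positivity)
      have hb2 : |Real.log (1-u)| ≤ 2 * (1-u) ^ (-(1/2) : ℝ) := by
        rw [abs_of_nonpos (Real.log_nonpos (by linarith) (by linarith))]
        rw [← Real.log_inv]
        have := Real.log_le_rpow_div (inv_nonneg.2 h1u.le) (by norm_num : (0:ℝ) < 1/2)
        calc Real.log (1-u)⁻¹ ≤ ((1-u)⁻¹) ^ ((1:ℝ)/2) / (1/2) := this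
          _ = 2 * (1-u) ^ (-(1/2) : ℝ) := by
              rw [← Real.rpow_neg_one (1-u), ← Real.rpow_mul h1u.le,
                show (-1:ℝ)*(1/2) = -(1/2) by norm_num]
              ring
      calc ‖u ^ ((n:ℝ) + 1/2) * Real.log (1-u)‖
          = |u ^ ((n:ℝ) + 1/2)| * |Real.log (1-u)| := abs_mul _ _
        _ ≤ 1 * (2 * (1-u) ^ (-(1/2) : ℝ)) := by
            apply mul_le_mul hb1 hb2 (abs_nonneg _) zero_le_one
        _ = 2 * (1-u) ^ (-(1/2) : ℝ) := one_mul _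


lemma G0_zero (n : ℕ) : G0 n 0 = 0 := by
  simp [G0, Real.log_one]

lemma O_sum (m : ℕ) : (∑ j ∈ range m, (1:ℝ)/(2*(j:ℝ)+3)) = O (m+1) - 1 := by
  induction m with
  | zero => simp [O]
  | succ k ih =>
      rw [Finset.sum_range_succ, ih]
      have h2 : O (k+1+1) = O (k+1) + 1/(2*((k:ℝ)+1)+1) := by
        rw [O, Finset.sum_range_succ, ← O]
        push_cast
        ring
      rw [h2]
      push_cast
      ring

theorem stmt17 (n : ℕ) :
    ∫ u in (0 : ℝ)..1, u ^ ((n : ℝ) + 1 / 2) * Real.log (1 - u)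
      = (4 * Real.log 2 - 4 * O (n + 1) - 4 / (2 * (n : ℝ) + 3)) / (2 * (n : ℝ) + 3) := by
  have hcont : ContinuousOn (fun u : ℝ => G0 n (Real.sqrt u)) (Set.Icc 0 1) :=
    (G0_cont n).comp Real.continuous_sqrt.continuousOn
      (fun u hu => ⟨Real.sqrt_nonneg u, Real.sqrt_le_one.2 hu.2⟩)
  have hderiv : ∀ x ∈ Set.Ioo (0:ℝ) 1,
      HasDerivWithinAt (fun u : ℝ => G0 n (Real.sqrt u))
        (x ^ ((n:ℝ) + 1/2) * Real.log (1-x)) (Set.Ioi x) x := by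
    intro x hx
    have hsx0 : 0 < Real.sqrt x := Real.sqrt_pos.2 hx.1
    have hsx1 : Real.sqrt x < 1 := by
      have := Real.sqrt_lt_sqrt hx.1.le hx.2
      simpa using this
    have hd := (G0_deriv n _ hsx0 hsx1).comp x (Real.hasDerivAt_sqrt hx.1.ne')
    have hsq : Real.sqrt x ^ 2 = x := Real.sq_sqrt hx.1.le
    have hxpow : x ^ ((n:ℝ) + 1/2) = Real.sqrt x ^ (2*n+1) := by
      rw [Real.rpow_add hx.1, Real.rpow_natCast, ← Real.sqrt_eq_rpow]
      have hxn : (Real.sqrt x) ^ (2*n) = x ^ n := by rw [pow_mul, hsq]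
      rw [← hxn, ← pow_succ]
    have hval : 2 * Real.sqrt x ^ (2*n+2) * Real.log (1 - Real.sqrt x ^ 2)
        * (1/(2*Real.sqrt x)) = x ^ ((n:ℝ) + 1/2) * Real.log (1-x) := by
      rw [hsq, hxpow]
      field_simp
      ring
    have : HasDerivAt (fun u : ℝ => G0 n (Real.sqrt u))
        (x ^ ((n:ℝ) + 1/2) * Real.log (1-x)) x := by
      rw [← hval]
      exact hd
    exact this.hasDerivWithinAt
  rw [intervalIntegral.integral_eq_sub_of_hasDeriv_right_of_le zero_le_one hcont hderiv
    (f_integrable n)]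
  rw [Real.sqrt_one, Real.sqrt_zero, G0_zero]
  have hM : (2*(n:ℝ)+3) ≠ 0 := by positivity
  have hsum1 : (∑ j ∈ range (n+1), (1:ℝ)^(2*j+3)/(2*(j:ℝ)+3))
      = ∑ j ∈ range (n+1), (1:ℝ)/(2*(j:ℝ)+3) := by
    refine Finset.sum_congr rfl fun j _ => by rw [one_pow]
  have hO2' : O (n+1+1) = O (n+1) + 1/(2*(n:ℝ)+3) := by
    rw [O, Finset.sum_range_succ, ← O]
    push_cast
    ring
  rw [show G0 n 1 = (2/(2*(n:ℝ)+3)) * (((1:ℝ)^(2*n+3) - 1) * Real.log (1 - (1:ℝ)^2))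
      - (4/(2*(n:ℝ)+3)) * ((∑ j ∈ range (n+1), (1:ℝ)^(2*j+3)/(2*(j:ℝ)+3)) + 1 - Real.log (1+1))
      from rfl]
  rw [hsum1, O_sum (n+1), hO2']
  norm_num
  field_simp
  ring
end
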